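/- arXiv:2008.06010 — 6 statements merged into one kernel-verified Lean document; each statement's English description precedes it below -/
import Mathlib

section
/- The Wronskian of the monomials x, x^3, ..., x^{2m-1} equals (∏_{j=1}^{m-1} (m-j)!) · 2^{m(m-1)/2} · x^{m(m+1)/2}. -/
open Finset Matrix

private lemma iteratedDeriv_pow_aux (k : ℕ) : ∀ n : ℕ,
    iteratedDeriv n (fun t : ℝ => t ^ k) =
      fun x : ℝ => (Nat.descFactorial k n : ℝ) * x ^ (k - n)
  | 0 => by simp
  | n + 1 => by
    rw [iteratedDeriv_succ, iteratedDeriv_pow_aux k n]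
    funext x
    rw [deriv_const_mul _ ((differentiable_pow (k - n)).differentiableAt), deriv_pow_field,
      Nat.descFactorial_succ, Nat.cast_mul, Nat.sub_sub]
    ring

private lemma gauss_aux (n : ℕ) : (n + 1) * n / 2 + (n + 1) = (n + 1) * (n + 2) / 2 := by
  have e1 : (n + 1) * (n + 2) = (n + 1) * n + (n + 1) * 2 := by ring
  rw [e1, Nat.add_mul_div_right _ _ (by norm_num : (0:ℕ) < 2)]

private lemma sum_fin_val (n : ℕ) : ∑ i : Fin (n + 1), (i : ℕ) = (n + 1) * n / 2 := by
  rw [Fin.sum_univ_eq_sum_range (fun i => i) (n + 1), Finset.sum_range_id]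
  simp

/-- The Wronskian of the monomials `x, x^3, ..., x^{2m-1}` equals
`(∏_{j=1}^{m-1} (m-j)!) · 2^{m(m-1)/2} · x^{m(m+1)/2}`. -/
theorem wronskian_odd_monomials (m : ℕ) (hm : 0 < m) (x : ℝ) :
    Matrix.det (Matrix.of fun i j : Fin m =>
        iteratedDeriv (i : ℕ) (fun t : ℝ => t ^ (2 * (j : ℕ) + 1)) x)
      = (∏ j ∈ Finset.Icc 1 (m - 1), Nat.factorial (m - j) : ℕ) *
          2 ^ (m * (m - 1) / 2) * x ^ (m * (m + 1) / 2) := by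
  obtain ⟨n, rfl⟩ := Nat.exists_eq_succ_of_ne_zero hm.ne'
  -- simplify m-1, m+1
  simp only [Nat.succ_eq_add_one, Nat.add_sub_cancel]
  -- step 0: sum of exponents for a valid permutation
  have hE : ∀ σ : Equiv.Perm (Fin (n + 1)), (∀ i : Fin (n + 1), (σ i : ℕ) ≤ 2 * (i : ℕ) + 1) →
      ∑ i : Fin (n + 1), (2 * (i : ℕ) + 1 - (σ i : ℕ)) = (n + 1) * (n + 2) / 2 := by
    intro σ h
    rw [Finset.sum_tsub_distrib _ (fun i _ => h i)]
    have h1 : ∑ i : Fin (n + 1), (σ i : ℕ) = ∑ i : Fin (n + 1), (i : ℕ) :=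
      Equiv.sum_comp σ (fun i : Fin (n + 1) => (i : ℕ))
    have h2 : ∑ i : Fin (n + 1), (2 * (i : ℕ) + 1)
        = 2 * ((n + 1) * n / 2) + (n + 1) := by
      rw [Finset.sum_add_distrib, ← Finset.mul_sum, sum_fin_val]
      simp
    rw [h1, h2, sum_fin_val, ← gauss_aux n]
    have h3 : 2 * ((n + 1) * n / 2) = (n + 1) * n :=
      Nat.mul_div_cancel' (by rw [mul_comm]; exact (Nat.even_mul_succ_self n).two_dvd)
    omega
  -- step 1: rewrite entries
  have hA : (Matrix.of fun i j : Fin (n + 1) =>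
      iteratedDeriv (i : ℕ) (fun t : ℝ => t ^ (2 * (j : ℕ) + 1)) x)
      = Matrix.of fun i j : Fin (n + 1) =>
        ((2 * (j : ℕ) + 1).descFactorial (i : ℕ) : ℝ) * x ^ (2 * (j : ℕ) + 1 - (i : ℕ)) := by
    ext i j
    simp [iteratedDeriv_pow_aux]
  rw [hA]
  -- step 2: factor out x-powers
  have hdet : (Matrix.of fun i j : Fin (n + 1) =>
      ((2 * (j : ℕ) + 1).descFactorial (i : ℕ) : ℝ) * x ^ (2 * (j : ℕ) + 1 - (i : ℕ))).det
      = x ^ ((n + 1) * (n + 2) / 2) *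
        (Matrix.of fun i j : Fin (n + 1) =>
          ((2 * (j : ℕ) + 1).descFactorial (i : ℕ) : ℝ)).det := by
    rw [Matrix.det_apply', Matrix.det_apply', Finset.mul_sum]
    refine Finset.sum_congr rfl fun σ _ => ?_
    simp only [Matrix.of_apply]
    by_cases h : ∀ i : Fin (n + 1), (σ i : ℕ) ≤ 2 * (i : ℕ) + 1
    · rw [Finset.prod_mul_distrib, Finset.prod_pow_eq_pow_sum, hE σ h]
      ring
    · push_neg at h
      obtain ⟨i, hi⟩ := h
      have hz : (((2 * (i : ℕ) + 1).descFactorial (σ i : ℕ)) : ℝ) = 0 := by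
        rw [Nat.descFactorial_eq_zero_iff_lt.mpr hi, Nat.cast_zero]
      rw [Finset.prod_eq_zero (Finset.mem_univ i) (by rw [hz, zero_mul]),
        Finset.prod_eq_zero (Finset.mem_univ i) hz]
      ring
  rw [hdet]
  -- step 3: the descFactorial determinant
  have hB : (Matrix.of fun i j : Fin (n + 1) =>
      ((2 * (j : ℕ) + 1).descFactorial (i : ℕ) : ℝ)).det
      = 2 ^ ((n + 1) * n / 2) * (Nat.superFactorial n : ℝ) := by
    rw [← Matrix.det_transpose]
    have hBt : (Matrix.of fun i j : Fin (n + 1) =>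
        ((2 * (j : ℕ) + 1).descFactorial (i : ℕ) : ℝ))ᵀ
        = Matrix.of fun i j : Fin (n + 1) =>
          (descPochhammer ℝ (j : ℕ)).eval (((2 * (i : ℕ) + 1 : ℕ)) : ℝ) := by
      ext i j
      simp only [Matrix.transpose_apply, Matrix.of_apply]
      exact (descPochhammer_eval_eq_descFactorial ℝ _ _).symm
    rw [hBt, ← Matrix.det_eval_matrixOfPolynomials_eq_det_vandermonde
      (fun i : Fin (n + 1) => ((2 * (i : ℕ) + 1 : ℕ) : ℝ)) (fun j => descPochhammer ℝ (j : ℕ))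
      (fun j => descPochhammer_natDegree ℝ (j : ℕ)) (fun j => monic_descPochhammer ℝ (j : ℕ)),
      Matrix.det_vandermonde]
    have hent : ∀ i : Fin (n + 1), ∀ j ∈ Finset.Ioi i,
        ((2 * (j : ℕ) + 1 : ℕ) : ℝ) - ((2 * (i : ℕ) + 1 : ℕ) : ℝ)
          = 2 * (((j : ℕ) : ℝ) - ((i : ℕ) : ℝ)) := by
      intro i j _
      push_cast
      ring
    rw [Finset.prod_congr rfl fun i _ => Finset.prod_congr rfl (hent i)]
    have hsplit : ∀ i : Fin (n + 1),
        ∏ j ∈ Finset.Ioi i, (2 * (((j : ℕ) : ℝ) - ((i : ℕ) : ℝ)))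
        = 2 ^ (Finset.Ioi i).card * ∏ j ∈ Finset.Ioi i, (((j : ℕ) : ℝ) - ((i : ℕ) : ℝ)) := by
      intro i
      rw [Finset.prod_mul_distrib, Finset.prod_const]
    rw [Finset.prod_congr rfl fun i _ => hsplit i, Finset.prod_mul_distrib,
      Finset.prod_pow_eq_pow_sum]
    have hcard : ∑ i : Fin (n + 1), (Finset.Ioi i).card = (n + 1) * n / 2 := by
      have : ∀ i : Fin (n + 1), (Finset.Ioi i).card = n - (i : ℕ) := by
        intro i
        rw [Fin.card_Ioi]
        omega
      rw [Finset.sum_congr rfl fun i _ => this i, Fin.sum_univ_eq_sum_range,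
        ← Finset.sum_range_reflect]
      have : ∀ j ∈ Finset.range (n + 1), n - (n + 1 - 1 - j) = j := by
        intro j hj
        rw [Finset.mem_range] at hj
        omega
      rw [Finset.sum_congr rfl this, Finset.sum_range_id]
      simp
    have hvdm : ∏ i : Fin (n + 1), ∏ j ∈ Finset.Ioi i, (((j : ℕ) : ℝ) - ((i : ℕ) : ℝ))
        = (Nat.superFactorial n : ℝ) := by
      have := Matrix.det_vandermonde_id_eq_superFactorial (R := ℝ) n
      rw [Matrix.det_vandermonde] at this
      exact this
    rw [hcard, hvdm]
  rw [hB]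
  -- step 4: RHS product of factorials
  have hRHS : (∏ j ∈ Finset.Icc 1 n, Nat.factorial (n + 1 - j)) = Nat.superFactorial n := by
    rw [← Finset.Ico_add_one_right_eq_Icc, Finset.prod_Ico_eq_prod_range]
    have h1 : ∀ i ∈ Finset.range (n + 1 - 1), Nat.factorial (n + 1 - (1 + i))
        = Nat.factorial (n - i) := by
      intro i hi
      congr 1
      omega
    rw [Finset.prod_congr rfl h1]
    have h2 : ∏ i ∈ Finset.range (n + 1 - 1), Nat.factorial (n - i)
        = ∏ i ∈ Finset.range n, Nat.factorial (i + 1) := by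
      rw [← Finset.prod_range_reflect (fun i => Nat.factorial (i + 1)) n]
      simp only [Nat.succ_eq_add_one, Nat.add_sub_cancel]
      refine Finset.prod_congr rfl fun i hi => ?_
      rw [Finset.mem_range] at hi
      congr 1
      omega
    rw [h2, Nat.prod_range_factorial_succ]
  rw [hRHS]
  ring
end

section
/- The first m odd classical Hermite polynomials coincide with odd monomials up to their Wronskian: W[H_1(x), H_3(x), ..., H_{2m-1}(x)] = W[x, x^3, ..., x^{2m-1}]. -/
open Polynomial Finset

lemma iteratedDeriv_aeval' (p : Polynomial ℤ) (i : ℕ) :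
    iteratedDeriv i (fun t : ℝ => aeval t p) = fun x => aeval x (derivative^[i] p) := by
  induction i with
  | zero => simp
  | succ i ih =>
    rw [iteratedDeriv_succ, ih, Function.iterate_succ_apply']
    funext x
    exact Polynomial.deriv_aeval _

lemma hermite_odd_sum (j : ℕ) :
    Polynomial.hermite (2 * j + 1) =
      ∑ j' ∈ Finset.range (j + 1),
        C ((Polynomial.hermite (2 * j + 1)).coeff (2 * j' + 1)) * X ^ (2 * j' + 1) := by
  ext k
  rw [finset_sum_coeff]
  simp only [coeff_C_mul, coeff_X_pow, mul_ite, mul_one, mul_zero]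
  rcases Nat.even_or_odd k with hk | hk
  · rw [coeff_hermite_of_odd_add (by rcases hk with ⟨l, rfl⟩; exact ⟨j + l, by ring⟩)]
    exact (Finset.sum_eq_zero fun j' _ => by
      rw [if_neg (by rcases hk with ⟨l, rfl⟩; omega)]).symm
  · obtain ⟨l, rfl⟩ := hk
    by_cases hl : l ≤ j
    · rw [Finset.sum_eq_single l (fun j' _ hj' => by rw [if_neg (by omega)])
        (fun h => absurd (Finset.mem_range.mpr (by omega)) h)]
      rw [if_pos rfl]
    · rw [coeff_hermite_of_lt (by omega)]
      exact (Finset.sum_eq_zero fun j' hj' => by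
        rw [if_neg (by simp only [Finset.mem_range] at hj'; omega)]).symm

lemma key_entry (m : ℕ) (x : ℝ) (i : ℕ) (j : ℕ) (hj : j < m) :
    iteratedDeriv i (fun t : ℝ => aeval t (Polynomial.hermite (2 * j + 1))) x
      = ∑ j' ∈ Finset.range m,
          (((Polynomial.hermite (2 * j + 1)).coeff (2 * j' + 1) : ℤ) : ℝ) *
            iteratedDeriv i (fun t : ℝ => aeval t (X ^ (2 * j' + 1) : Polynomial ℤ)) x := by
  simp only [iteratedDeriv_aeval']
  have h1 : ∀ j' ∈ Finset.range m, j' ∉ Finset.range (j + 1) →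
      (((Polynomial.hermite (2 * j + 1)).coeff (2 * j' + 1) : ℤ) : ℝ) *
        aeval x (derivative^[i] (X ^ (2 * j' + 1) : Polynomial ℤ)) = 0 := by
    intro j' _ hj'
    rw [coeff_hermite_of_lt (by simp only [Finset.mem_range, not_lt] at hj'; omega)]
    norm_num
  rw [← Finset.sum_subset (Finset.range_subset_range.mpr hj) h1]
  conv_lhs => rw [hermite_odd_sum j]
  rw [iterate_derivative_sum, map_sum]
  refine Finset.sum_congr rfl fun j' _ => ?_
  rw [iterate_derivative_C_mul, map_mul, aeval_C, eq_intCast]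

/-- `W[H_1, H_3, ..., H_{2m-1}] = W[x, x^3, ..., x^{2m-1}]`, where `H_n` is the
probabilist's Hermite polynomial. -/
theorem wronskian_odd_hermite_eq_wronskian_odd_monomials (m : ℕ) (x : ℝ) :
    Matrix.det (Matrix.of fun i j : Fin m =>
        iteratedDeriv (i : ℕ)
          (fun t : ℝ => Polynomial.aeval t (Polynomial.hermite (2 * (j : ℕ) + 1))) x)
      = Matrix.det (Matrix.of fun i j : Fin m =>
          iteratedDeriv (i : ℕ) (fun t : ℝ => t ^ (2 * (j : ℕ) + 1)) x) := by
  set A : Matrix (Fin m) (Fin m) ℝ := Matrix.of fun i j : Fin m =>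
    iteratedDeriv (i : ℕ) (fun t : ℝ => t ^ (2 * (j : ℕ) + 1)) x with hA
  set T : Matrix (Fin m) (Fin m) ℝ := Matrix.of fun j' j : Fin m =>
    (((Polynomial.hermite (2 * (j : ℕ) + 1)).coeff (2 * (j' : ℕ) + 1) : ℤ) : ℝ) with hT
  have hmono : ∀ (n : ℕ), (fun t : ℝ => t ^ n) = fun t : ℝ => aeval t (X ^ n : Polynomial ℤ) := by
    intro n; funext t; simp
  have hfac : (Matrix.of fun i j : Fin m =>
        iteratedDeriv (i : ℕ)
          (fun t : ℝ => Polynomial.aeval t (Polynomial.hermite (2 * (j : ℕ) + 1))) x) = A * T := by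
    ext i j
    rw [Matrix.mul_apply]
    simp only [hA, hT, Matrix.of_apply, hmono]
    rw [key_entry m x i j j.isLt, Fin.sum_univ_eq_sum_range
      (fun j' => iteratedDeriv (i : ℕ) (fun t : ℝ => aeval t (X ^ (2 * j' + 1) : Polynomial ℤ)) x *
        (((Polynomial.hermite (2 * (j : ℕ) + 1)).coeff (2 * j' + 1) : ℤ) : ℝ))]
    exact Finset.sum_congr rfl fun j' _ => mul_comm _ _
  rw [hfac, Matrix.det_mul]
  have hTdet : T.det = 1 := by
    rw [Matrix.det_of_upperTriangular (M := T)
      (fun j' j h => by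
        simp only [hT, Matrix.of_apply]
        rw [coeff_hermite_of_lt (by
          simp only [Function.comp, id] at h
          have := (Fin.lt_def).mp h
          omega)]
        norm_num)]
    refine Finset.prod_eq_one fun k _ => ?_
    simp only [hT, Matrix.of_apply]
    rw [coeff_hermite_self]
    norm_num
  rw [hTdet, mul_one]
end

section
/- Let p(x) = ∑_{i=0}^n a_i x^{n-i} be a monic degree-n polynomial with complex coefficients satisfying the differential equation -p'' + x p' + (2m/x) p' = n p (as an identity of rational functions, m ∈ ℤ_{≥0}). Then all coefficients a_i are integers. -/
open Polynomial

private lemma prodcmul (c : ℤ) (f : ℕ → ℤ) (k : ℕ) :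
    ∏ j ∈ Finset.range k, (c * f j) = c^k * ∏ j ∈ Finset.range k, f j := by
  induction k with
  | zero => simp
  | succ k ih => rw [Finset.prod_range_succ, Finset.prod_range_succ, ih, pow_succ]; ring

private lemma prodadd (b k : ℕ) : ∏ j ∈ Finset.range k, ((b:ℤ) + j) = b.ascFactorial k := by
  induction k with
  | zero => simp
  | succ k ih => rw [Finset.prod_range_succ, ih, Nat.ascFactorial_succ]; push_cast; ring

private lemma prodsub (b k : ℕ) (h : k ≤ b) :
    ∏ j ∈ Finset.range k, ((b:ℤ) - j) = b.descFactorial k := by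
  induction k with
  | zero => simp
  | succ k ih =>
    rw [Finset.prod_range_succ, ih (Nat.le_of_succ_le h), Nat.descFactorial_succ,
      Nat.cast_mul, Nat.cast_sub (Nat.le_of_succ_le h)]
    ring

private lemma factdvd (a : ℤ) (k : ℕ) :
    (k.factorial : ℤ) ∣ ∏ j ∈ Finset.range k, (a + j) := by
  rcases le_or_gt 0 a with h | h
  · obtain ⟨b, rfl⟩ := Int.eq_ofNat_of_zero_le h
    rw [prodadd]
    exact Int.natCast_dvd_natCast.mpr (Nat.factorial_dvd_ascFactorial b k)
  · obtain ⟨b, rfl⟩ : ∃ b : ℕ, a = -(b:ℤ) := ⟨a.natAbs, by omega⟩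
    rcases le_or_gt k b with hk | hk
    · have he : ∏ j ∈ Finset.range k, (-(b:ℤ) + j)
          = (-1)^k * ∏ j ∈ Finset.range k, ((b:ℤ) - j) := by
        rw [← prodcmul]
        exact Finset.prod_congr rfl (fun _ _ => by ring)
      rw [he, prodsub b k hk]
      exact Dvd.dvd.mul_left (Int.natCast_dvd_natCast.mpr (Nat.factorial_dvd_descFactorial b k)) _
    · have : ∏ j ∈ Finset.range k, (-(b:ℤ) + j) = 0 :=
        Finset.prod_eq_zero (Finset.mem_range.mpr hk) (by ring)
      simp [this]

private lemma bigdvd (m n k : ℕ) (hk : 2 * k ≤ n) :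
    ((2:ℤ)^k * k.factorial) ∣
      ∏ j ∈ Finset.range k, (((n:ℤ) - 2*j) * (2*(m:ℤ) - n + 2*j + 1)) := by
  rw [Finset.prod_mul_distrib]
  rcases Nat.even_or_odd n with ⟨s, hs⟩ | ⟨s, hs⟩
  · -- n = s + s
    have h1 : ∏ j ∈ Finset.range k, ((n:ℤ) - 2*j)
        = 2^k * ∏ j ∈ Finset.range k, ((s:ℤ) - j) := by
      rw [← prodcmul]
      refine Finset.prod_congr rfl (fun _ _ => ?_)
      have : (n:ℤ) = 2 * s := by exact_mod_cast (show n = 2*s by omega)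
      rw [this]; ring
    rw [h1, prodsub s k (by omega)]
    exact dvd_mul_of_dvd_left
      (mul_dvd_mul_left _ (Int.natCast_dvd_natCast.mpr (Nat.factorial_dvd_descFactorial s k))) _
  · -- n = 2s + 1
    have h2 : ∏ j ∈ Finset.range k, (2*(m:ℤ) - n + 2*j + 1)
        = 2^k * ∏ j ∈ Finset.range k, (((m:ℤ) - s) + j) := by
      rw [← prodcmul]
      refine Finset.prod_congr rfl (fun _ _ => ?_)
      have : (n:ℤ) = 2 * s + 1 := by exact_mod_cast (show n = 2*s+1 by omega)
      rw [this]; ring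
    rw [h2]
    exact Dvd.dvd.mul_left (mul_dvd_mul_left _ (factdvd ((m:ℤ) - s) k)) _

/-- if a monic polynomial `p ∈ ℂ[x]` of degree `n` satisfies the differential
equation `-p'' + x p' + (2m/x) p' = n p` (as an identity of rational functions, i.e.
`-x p'' + x² p' + 2m p' = n x p` as polynomials), then all its coefficients are integers. -/
theorem integrality_of_mHermite_eigenpolynomial (m n : ℕ) (p : Polynomial ℂ)
    (hmonic : p.Monic) (hdeg : p.natDegree = n)
    (hode : -(X * derivative (derivative p)) + X ^ 2 * derivative p
        + C (2 * (m : ℂ)) * derivative p = C (n : ℂ) * (X * p)) :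
    ∀ i : ℕ, ∃ z : ℤ, p.coeff i = (z : ℂ) := by
  -- coefficient recurrence
  have hrec : ∀ k : ℕ, ((n:ℂ) - k) * p.coeff k
      = ((k:ℂ)+2) * (2*(m:ℂ) - k - 1) * p.coeff (k+2) := by
    intro k
    have h := congrArg (fun q => Polynomial.coeff q (k+1)) hode
    simp only [coeff_add, coeff_neg, coeff_C_mul, coeff_X_mul, coeff_derivative] at h
    rcases k with _ | j
    · rw [pow_two, mul_assoc X X (derivative p), show (0:ℕ) + (0+1) = 0 + 1 from rfl,
        coeff_X_mul] at h
      rw [show ((X : ℂ[X]) * derivative p).coeff 0 = 0 by simp [mul_coeff_zero]] at h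
      push_cast at h ⊢
      linear_combination -h
    · rw [show j + 1 + 1 = j + 2 from rfl, coeff_X_pow_mul] at h
      rw [show p.coeff (j+2+1) = p.coeff (j+1+2) from rfl] at h
      simp only [coeff_derivative] at h
      push_cast at h ⊢
      linear_combination -h
  have htop : ∀ j, n < j → p.coeff j = 0 := fun j hj =>
    coeff_eq_zero_of_natDegree_lt (hdeg ▸ hj)
  -- odd chain: coefficients of wrong parity vanish
  have hz : ∀ d : ℕ, 2*d + 1 ≤ n → p.coeff (n - (2*d+1)) = 0 := by
    intro d
    induction d with
    | zero =>
      intro hd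
      have h := hrec (n - 1)
      rw [show n - 1 + 2 = n + 1 by omega, htop (n+1) (by omega)] at h
      have hc : ((n - 1 : ℕ) : ℂ) = (n:ℂ) - 1 := by
        rw [Nat.cast_sub (by omega)]; norm_num
      rw [hc] at h
      rw [show n - (2*0+1) = n - 1 by omega]
      linear_combination h
    | succ d ih =>
      intro hd
      have h := hrec (n - (2*(d+1)+1))
      rw [show n - (2*(d+1)+1) + 2 = n - (2*d+1) by omega, ih (by omega)] at h
      have hc : ((n - (2*(d+1)+1) : ℕ) : ℂ) = (n:ℂ) - (2*(d+1)+1 : ℕ) :=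
        Nat.cast_sub (by omega)
      rw [hc] at h
      have hne : ((2*(d+1)+1 : ℕ) : ℂ) ≠ 0 := Nat.cast_ne_zero.mpr (by omega)
      have h' : ((2*(d+1)+1 : ℕ) : ℂ) * p.coeff (n - (2*(d+1)+1)) = 0 := by
        push_cast at h ⊢; linear_combination h
      exact (mul_eq_zero.mp h').resolve_left hne
  -- main chain closed form
  have hmain : ∀ k : ℕ, 2*k ≤ n →
      ((2:ℂ)^k * (k.factorial : ℂ)) * p.coeff (n - 2*k)
        = ((∏ j ∈ Finset.range k, (((n:ℤ) - 2*j) * (2*(m:ℤ) - n + 2*j + 1)) : ℤ) : ℂ) := by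
    intro k
    induction k with
    | zero =>
      intro _
      have h1 : p.coeff (n - 2*0) = 1 := by
        rw [show n - 2*0 = p.natDegree by rw [hdeg]; omega]; exact hmonic.coeff_natDegree
      simp only [Nat.mul_zero, Nat.sub_zero] at h1
      simp [h1]
    | succ k ih =>
      intro hk
      have h := hrec (n - 2*(k+1))
      rw [show n - 2*(k+1) + 2 = n - 2*k by omega] at h
      have hc : ((n - 2*(k+1) : ℕ) : ℂ) = (n:ℂ) - 2*(k+1) := by
        rw [Nat.cast_sub (by omega)]; push_cast; ring
      rw [hc] at h
      have ihh := ih (by omega)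
      rw [Finset.prod_range_succ, Int.cast_mul]
      have hc2 : ((n - 2*k : ℕ) : ℂ) = (n:ℂ) - 2*k := by
        rw [Nat.cast_sub (by omega)]; push_cast; ring
      have hcast : ((((n:ℤ) - 2*k) * (2*(m:ℤ) - n + 2*k + 1) : ℤ) : ℂ)
          = ((n:ℂ) - 2*k) * (2*(m:ℂ) - n + 2*k + 1) := by push_cast; ring
      rw [hcast, Nat.factorial_succ]
      push_cast at ihh ⊢
      linear_combination ((2:ℂ)^k * (k.factorial:ℂ)) * h
        + ((n:ℂ) - 2*k) * (2*(m:ℂ) - n + 2*k + 1) * ihh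
  -- conclude
  intro i
  rcases lt_or_ge n i with hi | hi
  · exact ⟨0, by simpa using htop i hi⟩
  rcases Nat.even_or_odd (n - i) with ⟨d, hd⟩ | ⟨d, hd⟩
  · -- n - i = 2d
    set k := d
    have hk : 2*k ≤ n := by omega
    have hik : i = n - 2*k := by omega
    obtain ⟨z, hz'⟩ := bigdvd m n k hk
    refine ⟨z, ?_⟩
    have hD : ((2:ℂ)^k * (k.factorial : ℂ)) ≠ 0 :=
      mul_ne_zero (pow_ne_zero _ two_ne_zero) (Nat.cast_ne_zero.mpr k.factorial_ne_zero)
    have h := hmain k hk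
    rw [hz'] at h
    have h2 : ((2:ℂ)^k * (k.factorial : ℂ)) * p.coeff (n - 2*k)
        = ((2:ℂ)^k * (k.factorial : ℂ)) * (z:ℂ) := by
      push_cast at h ⊢; linear_combination h
    rw [hik]
    exact mul_left_cancel₀ hD h2
  · refine ⟨0, ?_⟩
    have := hz d (by omega)
    rw [show n - (2*d+1) = i by omega] at this
    simpa using this
end

section
/- The power sums σ_k = ∑_{i=1}^N π_i^k of Polychronakos' operators pairwise commute: [σ_k, σ_l] = 0 for all k, l ≥ 0. -/
open MvPolynomial

/-- The type `A_{N-1}` rational Dunkl operator `D_i = ∂_i + m ∑_{j≠i} (x_i-x_j)⁻¹(s_{ij}-1)`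
with parameter `m`, acting on functions of `N` real variables. -/
noncomputable def dunklOp (N : ℕ) (m : ℝ) (i : Fin N)
    (f : (Fin N → ℝ) → ℝ) : (Fin N → ℝ) → ℝ :=
  fun x => fderiv ℝ f x (Pi.single i 1) +
    m * ∑ j ∈ Finset.univ.erase i, (f (x ∘ Equiv.swap i j) - f x) / (x i - x j)

/-- Polychronakos' operator `π_i = x_i D_i`. -/
noncomputable def polychronakosOp (N : ℕ) (m : ℝ) (i : Fin N)
    (f : (Fin N → ℝ) → ℝ) : (Fin N → ℝ) → ℝ :=
  fun x => x i * dunklOp N m i f x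

/-- The power sum `σ_k = ∑_{i=1}^N π_i^k` of Polychronakos' operators. -/
noncomputable def sigmaOp (N : ℕ) (m : ℝ) (k : ℕ)
    (f : (Fin N → ℝ) → ℝ) : (Fin N → ℝ) → ℝ :=
  fun x => ∑ i : Fin N, (polychronakosOp N m i)^[k] f x

namespace PolyDunkl

variable {N : ℕ}


variable {N : ℕ}

lemma X_sub_dvd (i j : Fin N) (p : MvPolynomial (Fin N) ℝ) :
    (X i - X j : MvPolynomial (Fin N) ℝ) ∣ (rename (Equiv.swap i j) p - p) := by
  induction p using MvPolynomial.induction_on with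
  | C a => simp
  | add p q hp hq =>
      have h : rename (Equiv.swap i j) (p + q) - (p + q)
          = (rename (Equiv.swap i j) p - p) + (rename (Equiv.swap i j) q - q) := by
        simp only [map_add]; ring
      rw [h]; exact dvd_add hp hq
  | mul_X p k hp =>
      have hk : rename (Equiv.swap i j) (p * X k) - p * X k
          = rename (Equiv.swap i j) p * (X (Equiv.swap i j k) - X k)
            + (rename (Equiv.swap i j) p - p) * X k := by
        simp only [map_mul, rename_X]; ring
      rw [hk]
      refine dvd_add (Dvd.dvd.mul_left ?_ _) (hp.mul_right _)
      rcases eq_or_ne k i with rfl | hki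
      · rw [Equiv.swap_apply_left]
        exact dvd_neg.mp ⟨1, by ring⟩
      · rcases eq_or_ne k j with rfl | hkj
        · rw [Equiv.swap_apply_right]
        · rw [Equiv.swap_apply_of_ne_of_ne hki hkj]; simp

noncomputable def dquo (i j : Fin N) (p : MvPolynomial (Fin N) ℝ) : MvPolynomial (Fin N) ℝ :=
  (X_sub_dvd i j p).choose

lemma dquo_spec (i j : Fin N) (p : MvPolynomial (Fin N) ℝ) :
    rename (Equiv.swap i j) p - p = (X i - X j) * dquo i j p :=
  (X_sub_dvd i j p).choose_spec

lemma X_sub_ne_zero {i j : Fin N} (h : i ≠ j) :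
    (X i - X j : MvPolynomial (Fin N) ℝ) ≠ 0 := by
  intro hc
  have h2 := congrArg (eval (fun t => if t = i then (1:ℝ) else 0)) hc
  simp [eval_X, h.symm] at h2

lemma X_cancel {i j : Fin N} (h : i ≠ j) {A B : MvPolynomial (Fin N) ℝ}
    (h2 : (X i - X j) * A = (X i - X j) * B) : A = B :=
  mul_left_cancel₀ (X_sub_ne_zero h) h2


section PartTwo
variable {i j : Fin N} {p q : MvPolynomial (Fin N) ℝ}

lemma dquo_add (h : i ≠ j) (p q : MvPolynomial (Fin N) ℝ) :
    dquo i j (p + q) = dquo i j p + dquo i j q := by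
  apply X_cancel h
  rw [← dquo_spec, mul_add, ← dquo_spec, ← dquo_spec, map_add]
  ring

lemma dquo_zero (h : i ≠ j) : dquo i j (0 : MvPolynomial (Fin N) ℝ) = 0 := by
  apply X_cancel h
  rw [← dquo_spec]; simp

/-- `dquo i j (f * p) = f * dquo i j p` when `f` is swap-invariant. -/
lemma dquo_mul_invariant (h : i ≠ j) (f p : MvPolynomial (Fin N) ℝ)
    (hf : rename (Equiv.swap i j) f = f) :
    dquo i j (f * p) = f * dquo i j p := by
  apply X_cancel h
  rw [← dquo_spec, map_mul, hf]
  rw [show f * (rename (Equiv.swap i j) p) - f * p = f * (rename (Equiv.swap i j) p - p) by ring,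
    dquo_spec i j p]
  ring

lemma dquo_C_mul (h : i ≠ j) (c : ℝ) (p : MvPolynomial (Fin N) ℝ) :
    dquo i j (C c * p) = C c * dquo i j p :=
  dquo_mul_invariant h _ p (by simp)

lemma dquo_smul (h : i ≠ j) (c : ℝ) (p : MvPolynomial (Fin N) ℝ) :
    dquo i j (c • p) = c • dquo i j p := by
  rw [smul_eq_C_mul, smul_eq_C_mul]; exact dquo_C_mul h c p

lemma dquo_neg (h : i ≠ j) (p : MvPolynomial (Fin N) ℝ) :
    dquo i j (-p) = - dquo i j p := by
  apply X_cancel h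
  rw [← dquo_spec, map_neg]
  rw [show -(rename (Equiv.swap i j) p) - -p = -(rename (Equiv.swap i j) p - p) by ring,
    dquo_spec i j p]
  ring

lemma dquo_sub (h : i ≠ j) (p q : MvPolynomial (Fin N) ℝ) :
    dquo i j (p - q) = dquo i j p - dquo i j q := by
  rw [sub_eq_add_neg, dquo_add h, dquo_neg h, sub_eq_add_neg]

lemma dquo_sum (h : i ≠ j) {α : Type*} (s : Finset α) (f : α → MvPolynomial (Fin N) ℝ) :
    dquo i j (∑ a ∈ s, f a) = ∑ a ∈ s, dquo i j (f a) := by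
  classical
  induction s using Finset.induction_on with
  | empty => simpa using dquo_zero h
  | insert a s hns ih => rw [Finset.sum_insert hns, Finset.sum_insert hns,
      dquo_add h, ih]

lemma dquo_symm (h : i ≠ j) (p : MvPolynomial (Fin N) ℝ) :
    dquo j i p = - dquo i j p := by
  apply X_cancel h.symm
  rw [← dquo_spec, Equiv.swap_comm, dquo_spec i j p]
  ring

/-- Master rename lemma. -/
lemma rename_dquo (τ : Equiv.Perm (Fin N)) (h : i ≠ j) (p : MvPolynomial (Fin N) ℝ) :
    rename τ (dquo i j p) = dquo (τ i) (τ j) (rename τ p) := by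
  apply X_cancel (fun hc => h (τ.injective hc))
  rw [← dquo_spec]
  have hX : (X (τ i) - X (τ j) : MvPolynomial (Fin N) ℝ)
      = rename τ (X i - X j) := by simp [map_sub, rename_X]
  rw [hX, ← map_mul, ← dquo_spec, map_sub, rename_rename, rename_rename]
  have hfun : ⇑(Equiv.swap (τ i) (τ j)) ∘ ⇑τ = ⇑τ ∘ ⇑(Equiv.swap i j) := by
    funext t
    have hs := Equiv.swap_apply_apply τ i j
    show (Equiv.swap (τ i) (τ j)) (τ t) = τ (Equiv.swap i j t)
    rw [hs]; simp [Equiv.Perm.mul_apply]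
  rw [hfun]

lemma pderiv_dquo (h : i ≠ j) {k : Fin N} (hki : k ≠ i) (hkj : k ≠ j)
    (p : MvPolynomial (Fin N) ℝ) :
    pderiv k (dquo i j p) = dquo i j (pderiv k p) := by
  apply X_cancel h
  have h1 := congrArg (pderiv k) (dquo_spec i j p)
  rw [pderiv_mul, map_sub] at h1
  have h2 : pderiv k (X i - X j : MvPolynomial (Fin N) ℝ) = 0 := by
    rw [map_sub, pderiv_X_of_ne hki.symm, pderiv_X_of_ne hkj.symm, sub_zero]
  rw [h2, zero_mul, zero_add] at h1
  have h3 : pderiv k (rename (Equiv.swap i j) p) = rename (Equiv.swap i j) (pderiv k p) := by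
    have := pderiv_rename (Equiv.injective _) k p (f := ⇑(Equiv.swap i j))
    rwa [Equiv.swap_apply_of_ne_of_ne hki hkj] at this
  rw [h3] at h1
  rw [← h1, dquo_spec]

lemma pderiv_pair_dquo (h : i ≠ j) (p : MvPolynomial (Fin N) ℝ) :
    pderiv i (dquo i j p) + pderiv j (dquo i j p)
      = dquo i j (pderiv i p + pderiv j p) := by
  apply X_cancel h
  have h1 := congrArg (fun q => pderiv i q + pderiv j q) (dquo_spec i j p)
  simp only [map_sub, pderiv_mul] at h1
  have hXi : pderiv i (X i - X j : MvPolynomial (Fin N) ℝ) = 1 := by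
    rw [map_sub, pderiv_X_self, pderiv_X_of_ne h.symm, sub_zero]
  have hXj : pderiv j (X i - X j : MvPolynomial (Fin N) ℝ) = -1 := by
    rw [map_sub, pderiv_X_self, pderiv_X_of_ne h, zero_sub]
  have hri : pderiv i (rename (Equiv.swap i j) p) = rename (Equiv.swap i j) (pderiv j p) := by
    have := pderiv_rename (Equiv.injective _) j p (f := ⇑(Equiv.swap i j))
    rwa [Equiv.swap_apply_right] at this
  have hrj : pderiv j (rename (Equiv.swap i j) p) = rename (Equiv.swap i j) (pderiv i p) := by
    have := pderiv_rename (Equiv.injective _) i p (f := ⇑(Equiv.swap i j))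
    rwa [Equiv.swap_apply_left] at this
  simp only [pderiv_X_self, pderiv_X_of_ne h, pderiv_X_of_ne h.symm, hri, hrj] at h1
  have h2 : rename (Equiv.swap i j) (pderiv i p + pderiv j p) - (pderiv i p + pderiv j p)
      = (X i - X j) * dquo i j (pderiv i p + pderiv j p) := dquo_spec i j _
  rw [mul_add]
  rw [← h2, map_add]
  linear_combination -h1

lemma pderiv_pderiv_comm (a b : Fin N) (p : MvPolynomial (Fin N) ℝ) :
    pderiv a (pderiv b p) = pderiv b (pderiv a p) := by
  induction p using MvPolynomial.induction_on' with
  | monomial s c =>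
      rcases eq_or_ne a b with rfl | hab
      · rfl
      · simp only [pderiv_monomial]
        have hA : ((s - Finsupp.single b 1 : Fin N →₀ ℕ)) a = s a := by
          simp [Finsupp.tsub_apply, Finsupp.single_apply, hab.symm]
        have hB : ((s - Finsupp.single a 1 : Fin N →₀ ℕ)) b = s b := by
          simp [Finsupp.tsub_apply, Finsupp.single_apply, hab]
        have hE : s - Finsupp.single b 1 - Finsupp.single a 1
            = s - Finsupp.single a 1 - Finsupp.single b 1 := by
          ext t; simp only [Finsupp.tsub_apply]; omega
        rw [hA, hB, hE]
        congr 1; ring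
  | add p q hp hq => simp [map_add, hp, hq]


end PartTwo
/-- Commutation of divided-difference operators with disjoint index pairs. -/
lemma dquo_dquo_comm {i l j l' : Fin N} (hil : i ≠ l) (hjl' : j ≠ l')
    (h1 : i ≠ j) (h2 : i ≠ l') (h3 : l ≠ j) (h4 : l ≠ l')
    (p : MvPolynomial (Fin N) ℝ) :
    dquo i l (dquo j l' p) = dquo j l' (dquo i l p) := by
  apply X_cancel hil
  rw [← dquo_spec i l (dquo j l' p)]
  have hr : rename (Equiv.swap i l) (dquo j l' p) = dquo j l' (rename (Equiv.swap i l) p) := by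
    rw [rename_dquo _ hjl', Equiv.swap_apply_of_ne_of_ne h1.symm h3.symm,
      Equiv.swap_apply_of_ne_of_ne h2.symm h4.symm]
  rw [hr, ← dquo_sub hjl', dquo_spec i l p,
    dquo_mul_invariant hjl' _ _ (by
      rw [map_sub, rename_X, rename_X, Equiv.swap_apply_of_ne_of_ne h1 h2,
        Equiv.swap_apply_of_ne_of_ne h3 h4])]

section Hexagon
variable {i j k : Fin N}

lemma swapP1 (hij : i ≠ j) (hik : i ≠ k) (hjk : j ≠ k) :
    ⇑(Equiv.swap j k) ∘ ⇑(Equiv.swap i k) = ⇑(Equiv.swap i k) ∘ ⇑(Equiv.swap i j) := by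
  funext t
  simp only [Function.comp_apply, Equiv.swap_apply_def]
  split_ifs <;> simp_all

lemma swapP2 (hij : i ≠ j) (hik : i ≠ k) (hjk : j ≠ k) :
    ⇑(Equiv.swap j k) ∘ ⇑(Equiv.swap i j) = ⇑(Equiv.swap i j) ∘ ⇑(Equiv.swap i k) := by
  funext t
  simp only [Function.comp_apply, Equiv.swap_apply_def]
  split_ifs <;> simp_all

lemma swapP3 (hij : i ≠ j) (hik : i ≠ k) (hjk : j ≠ k) :
    ⇑(Equiv.swap i k) ∘ ⇑(Equiv.swap j k) = ⇑(Equiv.swap i j) ∘ ⇑(Equiv.swap i k) := by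
  funext t
  simp only [Function.comp_apply, Equiv.swap_apply_def]
  split_ifs <;> simp_all

lemma swapP4 (hij : i ≠ j) (hik : i ≠ k) (hjk : j ≠ k) :
    ⇑(Equiv.swap i j) ∘ ⇑(Equiv.swap j k) = ⇑(Equiv.swap i k) ∘ ⇑(Equiv.swap i j) := by
  funext t
  simp only [Function.comp_apply, Equiv.swap_apply_def]
  split_ifs <;> simp_all

/-- The hexagon/Yang–Baxter-type identity for the divided-difference operators. -/
lemma hexagon (hij : i ≠ j) (hik : i ≠ k) (hjk : j ≠ k) (p : MvPolynomial (Fin N) ℝ) :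
    dquo i j (dquo j k p) + dquo i k (dquo j i p) + dquo i k (dquo j k p)
      = dquo j i (dquo i k p) + dquo j k (dquo i j p) + dquo j k (dquo i k p) := by
  have hswapji : Equiv.swap j i = Equiv.swap i j := Equiv.swap_comm j i
  -- rename-of-dquo computations
  have hq1 : rename ⇑(Equiv.swap i j) (dquo j k p)
      = dquo i k (rename ⇑(Equiv.swap i j) p) := by
    rw [rename_dquo _ hjk, Equiv.swap_apply_right,
      Equiv.swap_apply_of_ne_of_ne hik.symm hjk.symm]
  have hq2 : rename ⇑(Equiv.swap i k) (dquo j i p)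
      = dquo j k (rename ⇑(Equiv.swap i k) p) := by
    rw [rename_dquo _ hij.symm, Equiv.swap_apply_left,
      Equiv.swap_apply_of_ne_of_ne hij.symm hjk]
  have hq3 : rename ⇑(Equiv.swap i k) (dquo j k p)
      = dquo j i (rename ⇑(Equiv.swap i k) p) := by
    rw [rename_dquo _ hjk, Equiv.swap_apply_right,
      Equiv.swap_apply_of_ne_of_ne hij.symm hjk]
  have hq4 : rename ⇑(Equiv.swap i j) (dquo i k p)
      = dquo j k (rename ⇑(Equiv.swap i j) p) := by
    rw [rename_dquo _ hik, Equiv.swap_apply_left,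
      Equiv.swap_apply_of_ne_of_ne hik.symm hjk.symm]
  have hq5 : rename ⇑(Equiv.swap j k) (dquo i j p)
      = dquo i k (rename ⇑(Equiv.swap j k) p) := by
    rw [rename_dquo _ hij, Equiv.swap_apply_of_ne_of_ne hij hik,
      Equiv.swap_apply_left]
  have hq6 : rename ⇑(Equiv.swap j k) (dquo i k p)
      = dquo i j (rename ⇑(Equiv.swap j k) p) := by
    rw [rename_dquo _ hik, Equiv.swap_apply_of_ne_of_ne hij hik,
      Equiv.swap_apply_right]
  -- the sixteen linear equations
  have a1 := dquo_spec i j (dquo j k p)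
  have a2 := dquo_spec i k (rename ⇑(Equiv.swap i j) p)
  rw [← hq1, rename_rename] at a2
  have b1 := dquo_spec i k (dquo j i p)
  have b2 := dquo_spec j k (rename ⇑(Equiv.swap i k) p)
  rw [← hq2, rename_rename, swapP1 hij hik hjk] at b2
  have c1 := dquo_spec i k (dquo j k p)
  have c2 := dquo_spec j i (rename ⇑(Equiv.swap i k) p)
  rw [hswapji, ← hq3, rename_rename] at c2
  have d1 := dquo_spec j i (dquo i k p)
  rw [hswapji] at d1
  have d2 := dquo_spec j k (rename ⇑(Equiv.swap i j) p)
  rw [← hq4, rename_rename, swapP2 hij hik hjk] at d2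
  have e1 := dquo_spec j k (dquo i j p)
  have e2 := dquo_spec i k (rename ⇑(Equiv.swap j k) p)
  rw [← hq5, rename_rename, swapP3 hij hik hjk] at e2
  have f1 := dquo_spec j k (dquo i k p)
  have f2 := dquo_spec i j (rename ⇑(Equiv.swap j k) p)
  rw [← hq6, rename_rename, swapP4 hij hik hjk] at f2
  have g1 := dquo_spec j k p
  have g2 := dquo_spec j i p
  rw [hswapji] at g2
  have g3 := dquo_spec i k p
  have g4 := dquo_spec i j p
  -- cancel the product (X i - X j)(X j - X k)(X i - X k)
  apply X_cancel hij
  apply X_cancel hjk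
  apply X_cancel hik
  set u : MvPolynomial (Fin N) ℝ := X i - X j
  set v : MvPolynomial (Fin N) ℝ := X j - X k
  set w : MvPolynomial (Fin N) ℝ := X i - X k
  linear_combination (norm := (simp only [u, v, w]; ring_nf))
    (-(v*w)) * a1 + (-v) * a2 + (w + u) * g1
    + (-(u*v)) * b1 + (-u) * b2 + (-v) * g2
    + (-(u*v)) * c1 + v * c2
    + (-(v*w)) * d1 + (-w) * d2 + (v - u) * g3
    + (u*w) * e1 + u * e2 + (-w) * g4
    + (u*w) * f1 + w * f2

end Hexagon
/-- The polynomial incarnation of the Dunkl operator `D_i`. -/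
noncomputable def Dpoly (m : ℝ) (i : Fin N) (p : MvPolynomial (Fin N) ℝ) :
    MvPolynomial (Fin N) ℝ :=
  pderiv i p + C m * ∑ l ∈ Finset.univ.erase i, dquo i l p

/-- The polynomial incarnation of Polychronakos' operator `π_i = x_i D_i`. -/
noncomputable def Ppoly (m : ℝ) (i : Fin N) (p : MvPolynomial (Fin N) ℝ) :
    MvPolynomial (Fin N) ℝ :=
  X i * Dpoly m i p

variable {i j : Fin N} {m : ℝ}

lemma Dpoly_expand (m : ℝ) (hij : i ≠ j) (p : MvPolynomial (Fin N) ℝ) :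
    Dpoly m i (Dpoly m j p) = pderiv i (pderiv j p)
      + C m * ((∑ l' ∈ Finset.univ.erase j, pderiv i (dquo j l' p))
        + ∑ l ∈ Finset.univ.erase i, dquo i l (pderiv j p))
      + C m ^ 2 * ∑ l ∈ Finset.univ.erase i,
          ∑ l' ∈ Finset.univ.erase j, dquo i l (dquo j l' p) := by
  unfold Dpoly
  rw [map_add (pderiv i), pderiv_C_mul, map_sum (pderiv i)]
  have h1 : ∀ l ∈ Finset.univ.erase i,
      dquo i l (pderiv j p + C m * ∑ l' ∈ Finset.univ.erase j, dquo j l' p)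
      = dquo i l (pderiv j p) + C m * ∑ l' ∈ Finset.univ.erase j, dquo i l (dquo j l' p) := by
    intro l hl
    have hil : i ≠ l := (Finset.ne_of_mem_erase hl).symm
    rw [dquo_add hil, dquo_C_mul hil, dquo_sum hil]
  rw [Finset.sum_congr rfl h1, Finset.sum_add_distrib]
  rw [show (∑ l ∈ Finset.univ.erase i,
      C m * ∑ l' ∈ Finset.univ.erase j, dquo i l (dquo j l' p))
    = C m * ∑ l ∈ Finset.univ.erase i,
        ∑ l' ∈ Finset.univ.erase j, dquo i l (dquo j l' p) from (Finset.mul_sum _ _ _).symm]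
  ring

lemma order1 (hij : i ≠ j) (p : MvPolynomial (Fin N) ℝ) :
    (∑ l' ∈ Finset.univ.erase j, pderiv i (dquo j l' p))
      + ∑ l ∈ Finset.univ.erase i, dquo i l (pderiv j p)
    = (∑ l' ∈ Finset.univ.erase i, pderiv j (dquo i l' p))
      + ∑ l ∈ Finset.univ.erase j, dquo j l (pderiv i p) := by
  classical
  set K : Finset (Fin N) := (Finset.univ.erase i).erase j with hK
  have hK' : (Finset.univ.erase j).erase i = K := Finset.erase_right_comm
  have hmemej : i ∈ Finset.univ.erase j := by simp [hij]
  have hmemei : j ∈ Finset.univ.erase i := by simp [hij.symm]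
  have hlK : ∀ l ∈ K, l ≠ i ∧ l ≠ j := by
    intro l hl
    exact ⟨Finset.ne_of_mem_erase (Finset.mem_of_mem_erase hl), Finset.ne_of_mem_erase hl⟩
  have e1 : ∑ l' ∈ Finset.univ.erase j, pderiv i (dquo j l' p)
      = pderiv i (dquo j i p) + ∑ l' ∈ K, dquo j l' (pderiv i p) := by
    rw [← Finset.add_sum_erase _ _ hmemej, hK']
    congr 1
    refine Finset.sum_congr rfl fun l hl => ?_
    exact pderiv_dquo (hlK l hl).2.symm hij (hlK l hl).1.symm p
  have e2 : ∑ l ∈ Finset.univ.erase i, dquo i l (pderiv j p)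
      = dquo i j (pderiv j p) + ∑ l ∈ K, dquo i l (pderiv j p) := by
    rw [← Finset.add_sum_erase _ _ hmemei]
  have e3 : ∑ l' ∈ Finset.univ.erase i, pderiv j (dquo i l' p)
      = pderiv j (dquo i j p) + ∑ l' ∈ K, dquo i l' (pderiv j p) := by
    rw [← Finset.add_sum_erase _ _ hmemei]
    congr 1
    refine Finset.sum_congr rfl fun l hl => ?_
    exact pderiv_dquo (hlK l hl).1.symm hij.symm (hlK l hl).2.symm p
  have e4 : ∑ l ∈ Finset.univ.erase j, dquo j l (pderiv i p)
      = dquo j i (pderiv i p) + ∑ l ∈ K, dquo j l (pderiv i p) := by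
    rw [← Finset.add_sum_erase _ _ hmemej, hK']
  rw [e1, e2, e3, e4]
  have hpair := pderiv_pair_dquo hij p
  rw [dquo_add hij] at hpair
  rw [dquo_symm hij p, dquo_symm hij (pderiv i p), map_neg]
  linear_combination -hpair

lemma order2 (hij : i ≠ j) (p : MvPolynomial (Fin N) ℝ) :
    ∑ l ∈ Finset.univ.erase i, ∑ l' ∈ Finset.univ.erase j, dquo i l (dquo j l' p)
    = ∑ l ∈ Finset.univ.erase j, ∑ l' ∈ Finset.univ.erase i, dquo j l (dquo i l' p) := by
  classical
  set K : Finset (Fin N) := (Finset.univ.erase i).erase j with hK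
  have hK' : (Finset.univ.erase j).erase i = K := Finset.erase_right_comm
  have hmemej : i ∈ Finset.univ.erase j := by simp [hij]
  have hmemei : j ∈ Finset.univ.erase i := by simp [hij.symm]
  have hlK : ∀ l ∈ K, l ≠ i ∧ l ≠ j := by
    intro l hl
    exact ⟨Finset.ne_of_mem_erase (Finset.mem_of_mem_erase hl), Finset.ne_of_mem_erase hl⟩
  have inner1 : ∀ l, ∑ l' ∈ Finset.univ.erase j, dquo i l (dquo j l' p)
      = dquo i l (dquo j i p) + ∑ l' ∈ K, dquo i l (dquo j l' p) := by
    intro l; rw [← Finset.add_sum_erase _ _ hmemej, hK']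
  have inner2 : ∀ l, ∑ l' ∈ Finset.univ.erase i, dquo j l (dquo i l' p)
      = dquo j l (dquo i j p) + ∑ l' ∈ K, dquo j l (dquo i l' p) := by
    intro l; rw [← Finset.add_sum_erase _ _ hmemei, ← hK]
  have hsplit : ∀ F : Fin N → Fin N → MvPolynomial (Fin N) ℝ,
      ∑ l ∈ K, ∑ l' ∈ K, F l l'
        = ∑ l ∈ K, F l l + ∑ x ∈ K.offDiag, F x.1 x.2 := by
    intro F
    rw [← Finset.sum_product', ← Finset.diag_union_offDiag K,
      Finset.sum_union (Finset.disjoint_diag_offDiag K), Finset.sum_diag]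
  have eL : ∑ l ∈ Finset.univ.erase i, ∑ l' ∈ Finset.univ.erase j, dquo i l (dquo j l' p)
      = dquo i j (dquo j i p) + ∑ l' ∈ K, dquo i j (dquo j l' p)
        + (∑ l ∈ K, dquo i l (dquo j i p)
          + (∑ l ∈ K, dquo i l (dquo j l p) + ∑ x ∈ K.offDiag, dquo i x.1 (dquo j x.2 p))) := by
    calc ∑ l ∈ Finset.univ.erase i, ∑ l' ∈ Finset.univ.erase j, dquo i l (dquo j l' p)
        = ∑ l ∈ Finset.univ.erase i,
            (dquo i l (dquo j i p) + ∑ l' ∈ K, dquo i l (dquo j l' p)) :=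
          Finset.sum_congr rfl fun l _ => inner1 l
      _ = (dquo i j (dquo j i p) + ∑ l' ∈ K, dquo i j (dquo j l' p))
          + ∑ l ∈ K, (dquo i l (dquo j i p) + ∑ l' ∈ K, dquo i l (dquo j l' p)) := by
          rw [← Finset.add_sum_erase _ _ hmemei, ← hK]
      _ = (dquo i j (dquo j i p) + ∑ l' ∈ K, dquo i j (dquo j l' p))
          + (∑ l ∈ K, dquo i l (dquo j i p) + ∑ l ∈ K, ∑ l' ∈ K, dquo i l (dquo j l' p)) := by
          rw [Finset.sum_add_distrib]
      _ = _ := by rw [hsplit]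
  have eR : ∑ l ∈ Finset.univ.erase j, ∑ l' ∈ Finset.univ.erase i, dquo j l (dquo i l' p)
      = dquo j i (dquo i j p) + ∑ l' ∈ K, dquo j i (dquo i l' p)
        + (∑ l ∈ K, dquo j l (dquo i j p)
          + (∑ l ∈ K, dquo j l (dquo i l p) + ∑ x ∈ K.offDiag, dquo j x.1 (dquo i x.2 p))) := by
    calc ∑ l ∈ Finset.univ.erase j, ∑ l' ∈ Finset.univ.erase i, dquo j l (dquo i l' p)
        = ∑ l ∈ Finset.univ.erase j,
            (dquo j l (dquo i j p) + ∑ l' ∈ K, dquo j l (dquo i l' p)) :=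
          Finset.sum_congr rfl fun l _ => inner2 l
      _ = (dquo j i (dquo i j p) + ∑ l' ∈ K, dquo j i (dquo i l' p))
          + ∑ l ∈ K, (dquo j l (dquo i j p) + ∑ l' ∈ K, dquo j l (dquo i l' p)) := by
          rw [← Finset.add_sum_erase _ _ hmemej, hK']
      _ = (dquo j i (dquo i j p) + ∑ l' ∈ K, dquo j i (dquo i l' p))
          + (∑ l ∈ K, dquo j l (dquo i j p) + ∑ l ∈ K, ∑ l' ∈ K, dquo j l (dquo i l' p)) := by
          rw [Finset.sum_add_distrib]
      _ = _ := by rw [hsplit]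
  rw [eL, eR]
  have T0 : dquo i j (dquo j i p) = dquo j i (dquo i j p) := by
    rw [dquo_symm hij p, dquo_symm hij (dquo i j p), dquo_neg hij]
  have hoff : ∑ x ∈ K.offDiag, dquo i x.1 (dquo j x.2 p)
      = ∑ x ∈ K.offDiag, dquo j x.1 (dquo i x.2 p) := by
    refine Finset.sum_nbij' (i := fun x : Fin N × Fin N => (x.2, x.1))
      (j := fun x : Fin N × Fin N => (x.2, x.1)) ?_ ?_ ?_ ?_ ?_
    · intro x hx
      rw [Finset.mem_offDiag] at hx ⊢
      exact ⟨hx.2.1, hx.1, hx.2.2.symm⟩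
    · intro x hx
      rw [Finset.mem_offDiag] at hx ⊢
      exact ⟨hx.2.1, hx.1, hx.2.2.symm⟩
    · intro x _; rfl
    · intro x _; rfl
    · intro x hx
      rw [Finset.mem_offDiag] at hx
      obtain ⟨h1, h2, h3⟩ := hx
      exact dquo_dquo_comm (hlK _ h1).1.symm (hlK _ h2).2.symm hij
        ((hlK _ h2).1.symm) ((hlK _ h1).2) h3 p
  have hhex : ∑ l ∈ K, (dquo i j (dquo j l p) + dquo i l (dquo j i p) + dquo i l (dquo j l p))
      = ∑ l ∈ K, (dquo j i (dquo i l p) + dquo j l (dquo i j p) + dquo j l (dquo i l p)) := by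
    refine Finset.sum_congr rfl fun l hl => ?_
    exact hexagon hij (hlK l hl).1.symm (hlK l hl).2.symm p
  simp only [Finset.sum_add_distrib] at hhex
  linear_combination T0 + hhex + hoff

lemma Dpoly_comm (m : ℝ) (hij : i ≠ j) (p : MvPolynomial (Fin N) ℝ) :
    Dpoly m i (Dpoly m j p) = Dpoly m j (Dpoly m i p) := by
  rw [Dpoly_expand m hij p, Dpoly_expand m hij.symm p, pderiv_pderiv_comm i j p,
    order1 hij p, order2 hij p]


section PartFive
variable {i j : Fin N} {m : ℝ}

lemma Dpoly_rename (m : ℝ) (hij : i ≠ j) (p : MvPolynomial (Fin N) ℝ) :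
    Dpoly m i (rename (Equiv.swap i j) p) = rename (Equiv.swap i j) (Dpoly m j p) := by
  unfold Dpoly
  rw [map_add, map_mul, rename_C, map_sum]
  congr 1
  · have := pderiv_rename (f := ⇑(Equiv.swap i j)) (Equiv.injective _) j p
    rw [Equiv.swap_apply_right] at this
    exact this
  · congr 1
    rw [Finset.sum_congr rfl (fun l hl => rename_dquo (Equiv.swap i j)
      (Finset.ne_of_mem_erase hl).symm p)]
    refine (Finset.sum_nbij' (i := fun l => Equiv.swap i j l) (j := fun l => Equiv.swap i j l)
      ?_ ?_ ?_ ?_ ?_).symm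
    · intro l hl
      have hlj : l ≠ j := Finset.ne_of_mem_erase hl
      simp only [Finset.mem_erase, Finset.mem_univ, and_true]
      intro hc
      apply hlj
      have := congrArg (Equiv.swap i j) hc
      simpa using this
    · intro l hl
      have hli : l ≠ i := Finset.ne_of_mem_erase hl
      simp only [Finset.mem_erase, Finset.mem_univ, and_true]
      intro hc
      apply hli
      have := congrArg (Equiv.swap i j) hc
      simpa using this
    · intro l _; simp
    · intro l _; simp
    · intro l hl
      rw [show Equiv.swap i j j = i from Equiv.swap_apply_right i j]

lemma dquo_X_mul_same (hij : i ≠ j) (p : MvPolynomial (Fin N) ℝ) :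
    dquo i j (X j * p) = X j * dquo i j p + rename (Equiv.swap i j) p := by
  apply X_cancel hij
  rw [← dquo_spec i j (X j * p), map_mul, rename_X, Equiv.swap_apply_right]
  linear_combination (X j : MvPolynomial (Fin N) ℝ) * dquo_spec i j p

lemma Dpoly_X_mul (m : ℝ) (hij : i ≠ j) (p : MvPolynomial (Fin N) ℝ) :
    Dpoly m i (X j * p) = X j * Dpoly m i p + C m * rename (Equiv.swap i j) p := by
  unfold Dpoly
  have hd : pderiv i (X j * p) = X j * pderiv i p := by
    rw [pderiv_mul, pderiv_X_of_ne hij.symm]; ring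
  have hmemei : j ∈ Finset.univ.erase i := by simp [hij.symm]
  have hsum : ∑ l ∈ Finset.univ.erase i, dquo i l (X j * p)
      = X j * ∑ l ∈ Finset.univ.erase i, dquo i l p + rename (Equiv.swap i j) p := by
    rw [← Finset.add_sum_erase _ _ hmemei, ← Finset.add_sum_erase _ (fun l => dquo i l p) hmemei,
      dquo_X_mul_same hij]
    rw [Finset.sum_congr rfl (fun l hl => dquo_mul_invariant
      (Finset.ne_of_mem_erase (Finset.mem_of_mem_erase hl)).symm (X j) p
      (by rw [rename_X, Equiv.swap_apply_of_ne_of_ne hij.symm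
        (Finset.ne_of_mem_erase hl).symm]))]
    rw [mul_add, Finset.mul_sum]
    ring
  rw [hd, hsum]
  ring

lemma Ppoly_rename (m : ℝ) (hij : i ≠ j) (p : MvPolynomial (Fin N) ℝ) :
    Ppoly m i (rename (Equiv.swap i j) p) = rename (Equiv.swap i j) (Ppoly m j p) := by
  unfold Ppoly
  rw [map_mul, rename_X, Equiv.swap_apply_right, Dpoly_rename m hij p]

lemma Ppoly_commutator (m : ℝ) (hij : i ≠ j) (p : MvPolynomial (Fin N) ℝ) :
    Ppoly m i (Ppoly m j p) - Ppoly m j (Ppoly m i p)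
      = C m * (Ppoly m i (rename (Equiv.swap i j) p)
          - Ppoly m j (rename (Equiv.swap i j) p)) := by
  have hswapji : Equiv.swap j i = Equiv.swap i j := Equiv.swap_comm j i
  have h1 : Ppoly m i (Ppoly m j p)
      = X i * (X j * Dpoly m i (Dpoly m j p) + C m * rename (Equiv.swap i j) (Dpoly m j p)) := by
    unfold Ppoly
    rw [Dpoly_X_mul m hij (Dpoly m j p)]
  have h2 : Ppoly m j (Ppoly m i p)
      = X j * (X i * Dpoly m j (Dpoly m i p) + C m * rename (Equiv.swap i j) (Dpoly m i p)) := by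
    unfold Ppoly
    rw [Dpoly_X_mul m hij.symm (Dpoly m i p), hswapji]
  have h3 : Ppoly m i (rename (Equiv.swap i j) p)
      = X i * rename (Equiv.swap i j) (Dpoly m j p) := by
    rw [Ppoly_rename m hij p]
    unfold Ppoly
    rw [map_mul, rename_X, Equiv.swap_apply_right]
  have h4 : Ppoly m j (rename (Equiv.swap i j) p)
      = X j * rename (Equiv.swap i j) (Dpoly m i p) := by
    rw [← hswapji, Ppoly_rename m hij.symm p, hswapji]
    unfold Ppoly
    rw [map_mul, rename_X, ← hswapji, Equiv.swap_apply_right]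
  rw [h1, h2, h3, h4, Dpoly_comm m hij p]
  ring

lemma Ppoly_add (m : ℝ) (i : Fin N) (p q : MvPolynomial (Fin N) ℝ) :
    Ppoly m i (p + q) = Ppoly m i p + Ppoly m i q := by
  unfold Ppoly Dpoly
  rw [map_add, Finset.sum_congr rfl
    (fun l hl => dquo_add (Finset.ne_of_mem_erase hl).symm p q), Finset.sum_add_distrib]
  ring

lemma Ppoly_smul (m : ℝ) (i : Fin N) (c : ℝ) (p : MvPolynomial (Fin N) ℝ) :
    Ppoly m i (c • p) = c • Ppoly m i p := by
  rw [smul_eq_C_mul, smul_eq_C_mul]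
  unfold Ppoly Dpoly
  rw [pderiv_C_mul, Finset.sum_congr rfl
    (fun l hl => dquo_C_mul (Finset.ne_of_mem_erase hl).symm c p), ← Finset.mul_sum]
  ring

/-- Polychronakos' operator as a linear endomorphism of the polynomial ring. -/
noncomputable def PL (m : ℝ) (i : Fin N) : Module.End ℝ (MvPolynomial (Fin N) ℝ) where
  toFun := Ppoly m i
  map_add' := Ppoly_add m i
  map_smul' := fun c p => Ppoly_smul m i c p

/-- The swap operator as a linear endomorphism. -/
noncomputable def SL (i j : Fin N) : Module.End ℝ (MvPolynomial (Fin N) ℝ) :=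
  (rename (R := ℝ) (Equiv.swap i j)).toLinearMap

lemma SL_mul_SL (i j : Fin N) : SL i j * SL i j = 1 := by
  apply LinearMap.ext
  intro p
  show rename (Equiv.swap i j) (rename (Equiv.swap i j) p) = p
  rw [rename_rename]
  rw [show ⇑(Equiv.swap i j) ∘ ⇑(Equiv.swap i j) = id from funext
    (fun t => Equiv.swap_apply_self i j t), rename_id, AlgHom.id_apply]

lemma SL_mul_PL (hij : i ≠ j) (m : ℝ) : SL i j * PL m i = PL m j * SL i j := by
  apply LinearMap.ext
  intro p
  show rename (Equiv.swap i j) (Ppoly m i p) = Ppoly m j (rename (Equiv.swap i j) p)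
  have hswapji : Equiv.swap j i = Equiv.swap i j := Equiv.swap_comm j i
  have := Ppoly_rename m hij.symm (i := j) (j := i) p
  rw [hswapji] at this
  exact this.symm

lemma PL_rel (hij : i ≠ j) (m : ℝ) :
    PL m i * PL m j - PL m j * PL m i = m • ((PL m i - PL m j) * SL i j) := by
  apply LinearMap.ext
  intro p
  show Ppoly m i (Ppoly m j p) - Ppoly m j (Ppoly m i p)
    = m • (Ppoly m i (rename (Equiv.swap i j) p) - Ppoly m j (rename (Equiv.swap i j) p))
  rw [Ppoly_commutator m hij p, ← smul_eq_C_mul]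


end PartFive


section Abstract
variable {A : Type*} [Ring A] [Algebra ℝ A]

lemma abs_s_pow {a b s : A} (hsa : s * a = b * s) (n : ℕ) : s * a ^ n = b ^ n * s := by
  induction n with
  | zero => simp
  | succ n ih =>
      calc s * a ^ (n + 1) = (s * a ^ n) * a := by rw [pow_succ, mul_assoc]
        _ = b ^ n * (s * a) := by rw [ih, mul_assoc]
        _ = b ^ (n + 1) * s := by rw [hsa, pow_succ, mul_assoc]

lemma abs_pow_one {a b s : A} {m : ℝ} (hsa : s * a = b * s)
    (hab : a * b - b * a = m • ((a - b) * s)) (p : ℕ) :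
    a ^ p * b - b * a ^ p = m • ((a ^ p - b ^ p) * s) := by
  induction p with
  | zero => simp
  | succ p ih =>
      have h1 : a ^ (p + 1) * b - b * a ^ (p + 1)
          = a * (a ^ p * b - b * a ^ p) + (a * b - b * a) * a ^ p := by
        rw [pow_succ']; noncomm_ring
      rw [h1, ih, hab, mul_smul_comm, smul_mul_assoc, ← smul_add]
      congr 1
      rw [mul_assoc (a - b) s (a ^ p), abs_s_pow hsa]
      rw [pow_succ', pow_succ']
      noncomm_ring

lemma abs_pow_pow {a b s : A} {m : ℝ} (hsa : s * a = b * s) (hsb : s * b = a * s)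
    (hab : a * b - b * a = m • ((a - b) * s)) (q p : ℕ) :
    a ^ p * b ^ q - b ^ q * a ^ p
      = m • ((∑ t ∈ Finset.range q,
          (b ^ t * a ^ (p + (q - 1 - t)) - b ^ (p + t) * a ^ (q - 1 - t))) * s) := by
  induction q with
  | zero => simp
  | succ q ih =>
      have h1 : a ^ p * b ^ (q + 1) - b ^ (q + 1) * a ^ p
          = (a ^ p * b ^ q - b ^ q * a ^ p) * b + b ^ q * (a ^ p * b - b * a ^ p) := by
        rw [pow_succ]; noncomm_ring
      rw [h1, ih, abs_pow_one hsa hab, smul_mul_assoc, mul_smul_comm, ← smul_add]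
      congr 1
      have h2 : (∑ t ∈ Finset.range q,
            (b ^ t * a ^ (p + (q - 1 - t)) - b ^ (p + t) * a ^ (q - 1 - t))) * s * b
          = (∑ t ∈ Finset.range q,
            (b ^ t * a ^ (p + (q + 1 - 1 - t)) - b ^ (p + t) * a ^ (q + 1 - 1 - t))) * s := by
        rw [mul_assoc, hsb, ← mul_assoc, Finset.sum_mul]
        rw [show (∑ t ∈ Finset.range q,
            (b ^ t * a ^ (p + (q + 1 - 1 - t)) - b ^ (p + t) * a ^ (q + 1 - 1 - t)))
          = ∑ t ∈ Finset.range q,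
            ((b ^ t * a ^ (p + (q - 1 - t)) - b ^ (p + t) * a ^ (q - 1 - t)) * a) from
          Finset.sum_congr rfl fun t ht => by
            have ht' : t < q := Finset.mem_range.mp ht
            have e1 : p + (q + 1 - 1 - t) = (p + (q - 1 - t)) + 1 := by omega
            have e2 : q + 1 - 1 - t = (q - 1 - t) + 1 := by omega
            rw [e1, e2, pow_succ, pow_succ]
            noncomm_ring, Finset.sum_mul]
      rw [h2, Finset.sum_range_succ, add_mul]
      congr 1
      have e3 : p + (q + 1 - 1 - q) = p := by omega
      have e4 : q + 1 - 1 - q = 0 := by omega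
      rw [e3, e4, pow_zero, mul_one,
        show (b : A) ^ (p + q) = b ^ q * b ^ p from by rw [← pow_add, Nat.add_comm]]
      noncomm_ring

lemma abs_C_zero {a b s : A} {m : ℝ} (hsa : s * a = b * s) (hsb : s * b = a * s)
    (hab : a * b - b * a = m • ((a - b) * s)) :
    ∀ n p q, p + q = n →
      a ^ p * b ^ q - b ^ q * a ^ p + (b ^ p * a ^ q - a ^ q * b ^ p) = 0 := by
  intro n
  induction n using Nat.strong_induction_on with
  | _ n IH =>
    intro p q hpq
    have hba : b * a - a * b = m • ((b - a) * s) := by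
      have h2 : b * a - a * b = -(a * b - b * a) := by noncomm_ring
      rw [h2, hab, ← smul_neg]
      congr 1
      noncomm_ring
    have main : ∀ p q, p + q = n → p ≤ q →
        a ^ p * b ^ q - b ^ q * a ^ p + (b ^ p * a ^ q - a ^ q * b ^ p) = 0 := by
      intro p q hpq hple
      rcases Nat.eq_zero_or_pos p with rfl | hp
      · simp
      have hq : 1 ≤ q := le_trans hp hple
      set K := p + q - 1 with hKdef
      set g : ℕ → A := fun t => b ^ t * a ^ (K - t) + a ^ t * b ^ (K - t) with hg
      have hF1 := abs_pow_pow hsa hsb hab q p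
      have hF2 := abs_pow_pow hsb hsa hba q p
      have hFsum : a ^ p * b ^ q - b ^ q * a ^ p + (b ^ p * a ^ q - a ^ q * b ^ p)
          = m • ((∑ t ∈ Finset.range q, (g t - g (p + t))) * s) := by
        rw [hF1, hF2, ← smul_add, ← add_mul, ← Finset.sum_add_distrib]
        congr 2
        refine Finset.sum_congr rfl fun t ht => ?_
        have ht' : t < q := Finset.mem_range.mp ht
        have e1 : p + (q - 1 - t) = K - t := by omega
        have e2 : q - 1 - t = K - (p + t) := by omega
        rw [e1, e2, hg]
        exact sub_add_sub_comm _ _ _ _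
      rw [hFsum]
      -- transform the sum
      have hsum2 : ∑ t ∈ Finset.range q, (g t - g (p + t))
          = ∑ t ∈ Finset.Ico 0 p, (g t - g (K - t)) := by
        rw [Finset.sum_sub_distrib]
        have hIco : ∑ t ∈ Finset.range q, g (p + t) = ∑ t ∈ Finset.Ico p (p + q), g t := by
          rw [Finset.sum_Ico_eq_sum_range, show p + q - p = q from by omega]
        rw [hIco, Finset.range_eq_Ico]
        have split1 : ∑ t ∈ Finset.Ico 0 p, g t + ∑ t ∈ Finset.Ico p q, g t
            = ∑ t ∈ Finset.Ico 0 q, g t :=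
          Finset.sum_Ico_consecutive g (Nat.zero_le p) hple
        have split2 : ∑ t ∈ Finset.Ico p q, g t + ∑ t ∈ Finset.Ico q (p + q), g t
            = ∑ t ∈ Finset.Ico p (p + q), g t :=
          Finset.sum_Ico_consecutive g hple (by omega)
        have hrefl : ∑ t ∈ Finset.Ico q (p + q), g t = ∑ t ∈ Finset.Ico 0 p, g (K - t) := by
          refine (Finset.sum_nbij' (i := fun t => K - t) (j := fun t => K - t)
            ?_ ?_ ?_ ?_ ?_).symm
          · intro t ht
            rw [Finset.mem_Ico] at ht ⊢
            omega
          · intro t ht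
            rw [Finset.mem_Ico] at ht ⊢
            omega
          · intro t ht
            rw [Finset.mem_Ico] at ht
            omega
          · intro t ht
            rw [Finset.mem_Ico] at ht
            omega
          · intro t _
            rfl
        rw [← split1, ← split2, hrefl, Finset.sum_sub_distrib]
        abel
      rw [hsum2]
      have hzero : ∀ t ∈ Finset.Ico 0 p, g t - g (K - t) = 0 := by
        intro t ht
        rw [Finset.mem_Ico] at ht
        have htK : K - (K - t) = t := by omega
        have hIH := IH K (by omega) t (K - t) (by omega)
        rw [hg]
        simp only []
        rw [htK]
        linear_combination (norm := abel) hIH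
      rw [Finset.sum_congr rfl hzero]
      simp
    rcases le_or_gt p q with h | h
    · exact main p q hpq h
    · have hmain := main q p (by omega) (le_of_lt h)
      have hneg : a ^ p * b ^ q - b ^ q * a ^ p + (b ^ p * a ^ q - a ^ q * b ^ p)
          = -(a ^ q * b ^ p - b ^ p * a ^ q + (b ^ q * a ^ p - a ^ p * b ^ q)) := by
        abel
      rw [hneg, hmain, neg_zero]

/-- Power sums of a family satisfying the Polychronakos exchange relations commute. -/
lemma abs_sum_pow_commute {n : ℕ} (a : Fin n → A) (S : Fin n → Fin n → A) {m : ℝ}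
    (hsa : ∀ i j, i ≠ j → S i j * a i = a j * S i j)
    (hsb : ∀ i j, i ≠ j → S i j * a j = a i * S i j)
    (hab : ∀ i j, i ≠ j → a i * a j - a j * a i = m • ((a i - a j) * S i j))
    (k l : ℕ) :
    (∑ i, a i ^ k) * (∑ j, a j ^ l) = (∑ j, a j ^ l) * (∑ i, a i ^ k) := by
  rw [Finset.sum_mul_sum, Finset.sum_mul_sum]
  have key : ∀ i j, a i ^ k * a j ^ l - a j ^ l * a i ^ k
      = -(a j ^ k * a i ^ l - a i ^ l * a j ^ k) := by
    intro i j
    rcases eq_or_ne i j with rfl | hij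
    · rw [(Commute.refl (a i)).pow_pow k l]
      abel
    · have := abs_C_zero (hsa i j hij) (hsb i j hij) (hab i j hij) (k + l) k l rfl
      linear_combination (norm := abel) this
  have hT : (∑ i, ∑ j, (a i ^ k * a j ^ l - a j ^ l * a i ^ k)) = 0 := by
    set T := ∑ i, ∑ j, (a i ^ k * a j ^ l - a j ^ l * a i ^ k) with hTdef
    have h1 : T = -T := by
      calc T = ∑ i, ∑ j, -(a j ^ k * a i ^ l - a i ^ l * a j ^ k) := by
            rw [hTdef]
            exact Finset.sum_congr rfl fun i _ => Finset.sum_congr rfl fun j _ => key i j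
        _ = -∑ i, ∑ j, (a j ^ k * a i ^ l - a i ^ l * a j ^ k) := by
            simp [Finset.sum_neg_distrib]
        _ = -T := by
            rw [hTdef]
            exact congrArg Neg.neg Finset.sum_comm
    have h2 : (2 : ℝ) • T = 0 := by
      rw [two_smul]
      nth_rewrite 1 [h1]
      abel
    have := congrArg (fun x => (2 : ℝ)⁻¹ • x) h2
    simpa [smul_smul] using this
  calc (∑ i : Fin n, ∑ j : Fin n, a i ^ k * a j ^ l)
      = ∑ i : Fin n, ∑ j : Fin n, (a i ^ k * a j ^ l - a j ^ l * a i ^ k)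
        + ∑ i : Fin n, ∑ j : Fin n, a j ^ l * a i ^ k := by
        rw [← Finset.sum_add_distrib]
        refine Finset.sum_congr rfl fun i _ => ?_
        rw [← Finset.sum_add_distrib]
        refine Finset.sum_congr rfl fun j _ => ?_
        abel
    _ = ∑ i : Fin n, ∑ j : Fin n, a j ^ l * a i ^ k := by rw [hT, zero_add]
    _ = ∑ j : Fin n, ∑ i : Fin n, a j ^ l * a i ^ k := Finset.sum_comm

end Abstract
/-- The set of points with pairwise distinct coordinates is open. -/
lemma isOpen_offdiag : IsOpen {x : Fin N → ℝ | ∀ a b : Fin N, a ≠ b → x a ≠ x b} := by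
  have h : {x : Fin N → ℝ | ∀ a b : Fin N, a ≠ b → x a ≠ x b}
      = ⋂ (a : Fin N), ⋂ (b : Fin N), ⋂ (_ : a ≠ b), {x : Fin N → ℝ | x a ≠ x b} := by
    ext x; simp
  rw [h]
  refine isOpen_iInter_of_finite fun a => isOpen_iInter_of_finite fun b =>
    isOpen_iInter_of_finite fun hab => ?_
  exact isOpen_ne_fun (continuous_apply a) (continuous_apply b)

/-- Formal derivative of a multivariate polynomial function. -/
lemma hasFDerivAt_eval (p : MvPolynomial (Fin N) ℝ) (x : Fin N → ℝ) :
    HasFDerivAt (fun y : Fin N → ℝ => eval y p)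
      (∑ a, eval x (pderiv a p) • (ContinuousLinearMap.proj a : (Fin N → ℝ) →L[ℝ] ℝ)) x := by
  induction p using MvPolynomial.induction_on with
  | C c =>
      have h1 : (∑ a : Fin N, eval x (pderiv a (C c : MvPolynomial (Fin N) ℝ))
          • (ContinuousLinearMap.proj a : (Fin N → ℝ) →L[ℝ] ℝ)) = 0 := by
        simp [pderiv_C]
      rw [h1]
      simp only [eval_C]
      exact hasFDerivAt_const c x
  | add p q hp hq =>
      have h1 : (∑ a : Fin N, eval x (pderiv a (p + q))
            • (ContinuousLinearMap.proj a : (Fin N → ℝ) →L[ℝ] ℝ))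
          = (∑ a, eval x (pderiv a p) • (ContinuousLinearMap.proj a : (Fin N → ℝ) →L[ℝ] ℝ))
            + ∑ a, eval x (pderiv a q) • (ContinuousLinearMap.proj a : (Fin N → ℝ) →L[ℝ] ℝ) := by
        rw [← Finset.sum_add_distrib]
        refine Finset.sum_congr rfl fun a _ => ?_
        rw [map_add, map_add, add_smul]
      rw [h1]
      simp only [eval_add]
      exact hp.add hq
  | mul_X p k hp =>
      have h2 : HasFDerivAt (fun y : Fin N → ℝ => y k)
          (ContinuousLinearMap.proj k : (Fin N → ℝ) →L[ℝ] ℝ) x :=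
        (ContinuousLinearMap.proj (R := ℝ) (φ := fun _ : Fin N => ℝ) k).hasFDerivAt
      have hD : (∑ a : Fin N, eval x (pderiv a (p * X k))
            • (ContinuousLinearMap.proj a : (Fin N → ℝ) →L[ℝ] ℝ))
          = eval x p • (ContinuousLinearMap.proj k : (Fin N → ℝ) →L[ℝ] ℝ)
            + x k • ∑ a, eval x (pderiv a p)
              • (ContinuousLinearMap.proj a : (Fin N → ℝ) →L[ℝ] ℝ) := by
        have expand : ∀ a : Fin N, eval x (pderiv a (p * X k))
            = eval x (pderiv a p) * x k + eval x p * (if k = a then 1 else 0) := by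
          intro a
          rw [pderiv_mul, map_add, eval_mul, eval_mul, eval_X, pderiv_X, Pi.single_apply]
          split_ifs <;> simp
        rw [Finset.sum_congr rfl fun a _ => by rw [expand a, add_smul]]
        rw [Finset.sum_add_distrib]
        have hA : ∑ a : Fin N, (eval x (pderiv a p) * x k)
              • (ContinuousLinearMap.proj a : (Fin N → ℝ) →L[ℝ] ℝ)
            = x k • ∑ a, eval x (pderiv a p)
              • (ContinuousLinearMap.proj a : (Fin N → ℝ) →L[ℝ] ℝ) := by
          rw [Finset.smul_sum]
          refine Finset.sum_congr rfl fun a _ => ?_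
          rw [smul_smul, mul_comm]
        have hB : ∑ a : Fin N, (eval x p * (if k = a then 1 else 0))
              • (ContinuousLinearMap.proj a : (Fin N → ℝ) →L[ℝ] ℝ)
            = eval x p • (ContinuousLinearMap.proj k : (Fin N → ℝ) →L[ℝ] ℝ) := by
          rw [Finset.sum_eq_single k]
          · simp
          · intro b _ hbk
            rw [if_neg (Ne.symm hbk)]
            simp
          · intro h
            exact absurd (Finset.mem_univ k) h
        rw [hA, hB, add_comm]
      rw [hD]
      simp only [eval_mul, eval_X]
      exact hp.mul h2


lemma eval_deriv_single (p : MvPolynomial (Fin N) ℝ) (x : Fin N → ℝ) (i : Fin N) :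
    (∑ a, eval x (pderiv a p) • (ContinuousLinearMap.proj a : (Fin N → ℝ) →L[ℝ] ℝ))
      (Pi.single i 1) = eval x (pderiv i p) := by
  rw [ContinuousLinearMap.sum_apply]
  rw [Finset.sum_eq_single i]
  · simp
  · intro b _ hbi
    simp [Pi.single_apply, Ne.symm hbi]
  · intro h
    exact absurd (Finset.mem_univ i) h

lemma offdiag_comp (x : Fin N → ℝ) (hx : ∀ a b : Fin N, a ≠ b → x a ≠ x b)
    (σ : Equiv.Perm (Fin N)) :
    ∀ a b : Fin N, a ≠ b → (x ∘ σ) a ≠ (x ∘ σ) b := by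
  intro a b hab
  exact hx _ _ fun hc => hab (σ.injective hc)

/-- The key analytic-algebraic interface: on the off-diagonal set, Polychronakos'
operator acts on polynomial functions as `Ppoly`. -/
lemma polyOp_step (m : ℝ) (i : Fin N) (g : (Fin N → ℝ) → ℝ) (p : MvPolynomial (Fin N) ℝ)
    (hg : ∀ y : Fin N → ℝ, (∀ a b : Fin N, a ≠ b → y a ≠ y b) → g y = eval y p)
    (x : Fin N → ℝ) (hx : ∀ a b : Fin N, a ≠ b → x a ≠ x b) :
    polychronakosOp N m i g x = eval x (Ppoly m i p) := by
  have hO : {y : Fin N → ℝ | ∀ a b : Fin N, a ≠ b → y a ≠ y b} ∈ nhds x :=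
    isOpen_offdiag.mem_nhds hx
  have hev : g =ᶠ[nhds x] fun y => eval y p := Filter.eventuallyEq_of_mem hO hg
  have hfd : fderiv ℝ g x = fderiv ℝ (fun y => eval y p) x := hev.fderiv_eq
  show x i * (fderiv ℝ g x (Pi.single i 1) + m * ∑ j ∈ Finset.univ.erase i,
      (g (x ∘ Equiv.swap i j) - g x) / (x i - x j)) = eval x (Ppoly m i p)
  rw [hfd, (hasFDerivAt_eval p x).fderiv, eval_deriv_single]
  have hterm : ∀ j ∈ Finset.univ.erase i,
      (g (x ∘ Equiv.swap i j) - g x) / (x i - x j) = eval x (dquo i j p) := by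
    intro j hj
    have hji : j ≠ i := Finset.ne_of_mem_erase hj
    rw [hg _ (offdiag_comp x hx (Equiv.swap i j)), hg x hx]
    have h2 := congrArg (eval x) (dquo_spec i j p)
    rw [map_sub, eval_mul, map_sub, eval_X, eval_X, eval_rename] at h2
    rw [h2]
    exact mul_div_cancel_left₀ _ (sub_ne_zero.2 (hx i j hji.symm))
  rw [Finset.sum_congr rfl hterm]
  show x i * (eval x (pderiv i p) + m * ∑ j ∈ Finset.univ.erase i, eval x (dquo i j p))
    = eval x (X i * (pderiv i p + C m * ∑ l ∈ Finset.univ.erase i, dquo i l p))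
  rw [eval_mul, eval_X, eval_add, eval_mul, eval_C, map_sum]

lemma polyOp_iter (m : ℝ) (i : Fin N) (k : ℕ) :
    ∀ (g : (Fin N → ℝ) → ℝ) (p : MvPolynomial (Fin N) ℝ),
      (∀ y : Fin N → ℝ, (∀ a b : Fin N, a ≠ b → y a ≠ y b) → g y = eval y p) →
      ∀ y : Fin N → ℝ, (∀ a b : Fin N, a ≠ b → y a ≠ y b) →
        (polychronakosOp N m i)^[k] g y = eval y (((PL m i) ^ k) p) := by
  induction k with
  | zero =>
      intro g p hg y hy
      simpa using hg y hy
  | succ k ih =>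
      intro g p hg y hy
      rw [Function.iterate_succ_apply']
      have hinner := ih g p hg
      have hstep := polyOp_step m i ((polychronakosOp N m i)^[k] g) (((PL m i) ^ k) p)
        hinner y hy
      rw [hstep]
      congr 1
      rw [pow_succ']
      rfl


lemma SL_symm (i j : Fin N) : SL i j = SL j i := by
  unfold SL
  rw [Equiv.swap_comm]

/-- On the off-diagonal set, `sigmaOp` acts on polynomial functions as `∑ᵢ PLᵢᵏ`. -/
lemma sigma_step (m : ℝ) (l : ℕ) (g : (Fin N → ℝ) → ℝ) (w : MvPolynomial (Fin N) ℝ)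
    (hw : ∀ y : Fin N → ℝ, (∀ a b : Fin N, a ≠ b → y a ≠ y b) → g y = eval y w) :
    ∀ y : Fin N → ℝ, (∀ a b : Fin N, a ≠ b → y a ≠ y b) →
      sigmaOp N m l g y = eval y ((∑ i : Fin N, PL m i ^ l) w) := by
  intro y hy
  show (∑ i : Fin N, (polychronakosOp N m i)^[l] g y) = _
  calc ∑ i : Fin N, (polychronakosOp N m i)^[l] g y
      = ∑ i : Fin N, eval y ((PL m i ^ l) w) :=
        Finset.sum_congr rfl fun i _ => polyOp_iter m i l g w hw y hy
    _ = eval y (∑ i : Fin N, (PL m i ^ l) w) := (map_sum (eval y) _ _).symm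
    _ = eval y ((∑ i : Fin N, PL m i ^ l) w) := by rw [LinearMap.sum_apply]

end PolyDunkl

/-- the power sums `σ_k = ∑ π_i^k` of Polychronakos' operators pairwise
commute, `[σ_k, σ_l] = 0`, as operators on polynomials (stated pointwise away from the
diagonals `x_a = x_b`, where all the operators involved are defined). -/
theorem sigmaOp_commute (N : ℕ) (m : ℝ) (k l : ℕ)
    (p : MvPolynomial (Fin N) ℝ) (f : (Fin N → ℝ) → ℝ) (hf : f = fun x => eval x p)
    (x : Fin N → ℝ) (hx : ∀ a b : Fin N, a ≠ b → x a ≠ x b) :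
    sigmaOp N m k (sigmaOp N m l f) x = sigmaOp N m l (sigmaOp N m k f) x := by
  classical
  have hf' : ∀ y : Fin N → ℝ, (∀ a b : Fin N, a ≠ b → y a ≠ y b) → f y = eval y p := by
    intro y _
    rw [hf]
  have hL : sigmaOp N m k (sigmaOp N m l f) x
      = eval x ((∑ i : Fin N, PolyDunkl.PL m i ^ k)
          ((∑ i : Fin N, PolyDunkl.PL m i ^ l) p)) :=
    PolyDunkl.sigma_step m k _ _ (PolyDunkl.sigma_step m l f p hf') x hx
  have hR : sigmaOp N m l (sigmaOp N m k f) x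
      = eval x ((∑ i : Fin N, PolyDunkl.PL m i ^ l)
          ((∑ i : Fin N, PolyDunkl.PL m i ^ k) p)) :=
    PolyDunkl.sigma_step m l _ _ (PolyDunkl.sigma_step m k f p hf') x hx
  rw [hL, hR]
  have hcomm := PolyDunkl.abs_sum_pow_commute (n := N) (a := fun i => PolyDunkl.PL m i)
    (S := fun i j => PolyDunkl.SL i j) (m := m)
    (fun i j hij => PolyDunkl.SL_mul_PL hij m)
    (fun i j hij => by
      rw [PolyDunkl.SL_symm]
      exact PolyDunkl.SL_mul_PL hij.symm m)
    (fun i j hij => PolyDunkl.PL_rel hij m) k l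
  have happ := congrArg (fun E : Module.End ℝ (MvPolynomial (Fin N) ℝ) => E p) hcomm
  simp only [Module.End.mul_apply] at happ
  exact congrArg (eval x) happ
end

section
/- For m = 1, the m-Hermite polynomials satisfy the recurrence x² H_k^{(1)}(x) = ((k-1)/(k+1)) H_{k+2}^{(1)}(x) + (2k-1) H_k^{(1)}(x) + k(k-1) H_{k-2}^{(1)}(x) for all k ≥ 2. -/
open Polynomial

lemma derivative_hermite_succ (n : ℕ) :
    derivative (hermite (n + 1)) = C ((n : ℤ) + 1) * hermite n := by
  induction n with
  | zero => simp [hermite_one, hermite_zero]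
  | succ n ih =>
    rw [hermite_succ (n + 1), derivative_sub, derivative_mul, derivative_X, ih,
      derivative_mul, derivative_C, hermite_succ n]
    push_cast
    simp only [C_add, C_1]
    ring

noncomputable def HR (n : ℕ) : Polynomial ℝ := (hermite n).map (Int.castRingHom ℝ)

lemma HR_succ (n : ℕ) : HR (n + 1) = X * HR n - derivative (HR n) := by
  unfold HR
  rw [hermite_succ, Polynomial.map_sub, Polynomial.map_mul, map_X, derivative_map]

lemma HR_deriv (n : ℕ) : derivative (HR (n + 1)) = C ((n : ℝ) + 1) * HR n := by
  unfold HR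
  rw [derivative_map, derivative_hermite_succ, Polynomial.map_mul, map_C]
  simp

/-- The `m = 1` Hermite polynomial `H_n^{(1)} = W[x, H_n] = x H_n' - H_n`, where `H_n` is the
probabilist's Hermite polynomial. -/
noncomputable def mHermiteOne (n : ℕ) : Polynomial ℝ :=
  X * derivative ((hermite n).map (Int.castRingHom ℝ))
    - (hermite n).map (Int.castRingHom ℝ)

lemma mHermiteOne_eq (n : ℕ) : mHermiteOne n = X * derivative (HR n) - HR n := rfl

lemma key (m : ℕ) :
    X ^ 2 * mHermiteOne (m + 2)
      = C (((m : ℝ) + 1) / ((m : ℝ) + 3)) * mHermiteOne (m + 4)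
        + C (2 * (m : ℝ) + 3) * mHermiteOne (m + 2)
        + C (((m : ℝ) + 2) * ((m : ℝ) + 1)) * mHermiteOne m := by
  have h3 : C ((m : ℝ) + 3) ≠ 0 := by
    simp only [ne_eq, C_eq_zero]
    positivity
  apply mul_left_cancel₀ h3
  have hc : C ((m : ℝ) + 3) * C (((m : ℝ) + 1) / ((m : ℝ) + 3)) = C ((m : ℝ) + 1) := by
    rw [← C_mul]
    congr 1
    field_simp
  have d4 : derivative (HR (m + 4)) = C (((m + 3 : ℕ) : ℝ) + 1) * HR (m + 3) := HR_deriv (m + 3)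
  have s4 : HR (m + 4) = X * HR (m + 3) - derivative (HR (m + 3)) := HR_succ (m + 3)
  have d3 : derivative (HR (m + 3)) = C (((m + 2 : ℕ) : ℝ) + 1) * HR (m + 2) := HR_deriv (m + 2)
  have s3 : HR (m + 3) = X * HR (m + 2) - derivative (HR (m + 2)) := HR_succ (m + 2)
  have d2 : derivative (HR (m + 2)) = C (((m + 1 : ℕ) : ℝ) + 1) * HR (m + 1) := HR_deriv (m + 1)
  have s2 : HR (m + 2) = X * HR (m + 1) - derivative (HR (m + 1)) := HR_succ (m + 1)
  have d1 : derivative (HR (m + 1)) = C ((m : ℝ) + 1) * HR m := HR_deriv m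
  have s1 : HR (m + 1) = X * HR m - derivative (HR m) := HR_succ m
  push_cast at d4 d3 d2
  simp only [mHermiteOne_eq]
  rw [d4, s4, d3, s3, d2, s2, d1, s1]
  rw [mul_add, mul_add, ← mul_assoc (C ((m : ℝ) + 3)) (C (((m : ℝ) + 1) / ((m : ℝ) + 3))), hc]
  simp only [C_add, C_mul, C_1, map_ofNat]
  ring

/-- the recurrence
`x² H_k^{(1)} = ((k-1)/(k+1)) H_{k+2}^{(1)} + (2k-1) H_k^{(1)} + k(k-1) H_{k-2}^{(1)}`
for all `k ≥ 2`. -/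
theorem mHermiteOne_quadratic_recurrence (k : ℕ) (hk : 2 ≤ k) :
    X ^ 2 * mHermiteOne k
      = C (((k : ℝ) - 1) / ((k : ℝ) + 1)) * mHermiteOne (k + 2)
        + C (2 * (k : ℝ) - 1) * mHermiteOne k
        + C ((k : ℝ) * ((k : ℝ) - 1)) * mHermiteOne (k - 2) := by
  obtain ⟨m, rfl⟩ : ∃ m, k = m + 2 := ⟨k - 2, by omega⟩
  simp only [Nat.add_sub_cancel]
  have h := key m
  convert h using 3 <;> push_cast <;> ring
end

section
/- For m = 1, the m-Hermite polynomials satisfy the cubic recurrence x³ H_k^{(1)}(x) = ((k-1)/(k+2)) H_{k+3}^{(1)}(x) + 3(k-1) H_{k+1}^{(1)}(x) + 3k(k-1) H_{k-1}^{(1)}(x) + k(k-1)(k-2) H_{k-3}^{(1)}(x) for all k ≥ 3. -/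
open Polynomial

noncomputable def hR (n : ℕ) : Polynomial ℝ := (hermite n).map (Int.castRingHom ℝ)

lemma dZ (m : ℕ) : derivative (hermite (m+1)) = C ((m:ℤ)+1) * hermite m := by
  induction m with
  | zero => simp [hermite_one, hermite_zero]
  | succ p ih =>
    rw [hermite_succ (p+1), derivative_sub, derivative_mul, derivative_X, ih,
      derivative_C_mul]
    linear_combination (norm := (push_cast; simp only [C_add, C_1]; ring1))
      (-(C ((p:ℤ)+1))) * hermite_succ p

lemma dR (m : ℕ) : derivative (hR (m+1)) = C ((m:ℝ)+1) * hR m := by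
  unfold hR
  rw [derivative_map, dZ]
  simp [Polynomial.map_mul]

lemma XR (n : ℕ) : X * hR n = hR (n+1) + C (n:ℝ) * hR (n-1) := by
  cases n with
  | zero => simp [hR, hermite_one, hermite_zero]
  | succ m =>
    have h2 : hR (m+2) = X * hR (m+1) - derivative (hR (m+1)) := by
      unfold hR; rw [hermite_succ (m+1)]; simp [derivative_map]
    rw [dR] at h2
    have h3 : X * hR (m+1) = hR (m+2) + C ((m:ℝ)+1) * hR m := by
      rw [h2]; ring
    rw [h3]
    push_cast
    ring

lemma mho (n : ℕ) : mHermiteOne n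
    = C ((n:ℝ)-1) * hR n + C ((n:ℝ)*((n:ℝ)-1)) * hR (n-2) := by
  cases n with
  | zero =>
    show X * derivative (hR 0) - hR 0 = _
    simp [hR, hermite_zero]
  | succ m =>
    show X * derivative (hR (m+1)) - hR (m+1) = _
    rw [dR, mul_left_comm, XR m, show m + 1 - 2 = m - 1 from rfl]
    simp only [← smul_eq_C_mul]
    match_scalars <;> push_cast <;> ring

lemma cubic (n : ℕ) : X^3 * hR (n+1)
    = hR (n+4) + C (3*((n:ℝ)+2)) * hR (n+2) + C (3*((n:ℝ)+1)^2) * hR n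
      + C (((n:ℝ)+1)*(n:ℝ)*((n:ℝ)-1)) * hR (n-2) := by
  cases n with
  | zero =>
    have a0 : X * hR 0 = hR 1 := by simpa using XR 0
    have a1 : X * hR 1 = hR 2 + C (1:ℝ) * hR 0 := by
      have := XR 1; push_cast at this; exact this
    have a2 : X * hR 2 = hR 3 + C (2:ℝ) * hR 1 := by
      have := XR 2; push_cast at this; exact this
    have a3 : X * hR 3 = hR 4 + C (3:ℝ) * hR 2 := by
      have := XR 3; push_cast at this; exact this
    calc X^3 * hR 1 = X * (X * (X * hR 1)) := by ring
      _ = X * (X * hR 2) + C (1:ℝ) * (X * (X * hR 0)) := by rw [a1]; ring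
      _ = X * hR 3 + C (2:ℝ) * (X * hR 1) + C (1:ℝ) * (X * hR 1) := by
          rw [a2, a0]; ring
      _ = (hR 4 + C (3:ℝ) * hR 2) + C (2:ℝ) * (hR 2 + C (1:ℝ) * hR 0)
            + C (1:ℝ) * (hR 2 + C (1:ℝ) * hR 0) := by rw [a3, a1]
      _ = _ := by
          simp only [← smul_eq_C_mul]
          match_scalars <;> norm_num
  | succ m =>
    have a0 : X * hR m = hR (m+1) + C (m:ℝ) * hR (m-1) := XR m
    have a1 : X * hR (m+1) = hR (m+2) + C ((m:ℝ)+1) * hR m := by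
      have := XR (m+1); push_cast at this; exact this
    have a2 : X * hR (m+2) = hR (m+3) + C ((m:ℝ)+2) * hR (m+1) := by
      have := XR (m+2); push_cast at this; exact this
    have a3 : X * hR (m+3) = hR (m+4) + C ((m:ℝ)+3) * hR (m+2) := by
      have := XR (m+3); push_cast at this; exact this
    have a4 : X * hR (m+4) = hR (m+5) + C ((m:ℝ)+4) * hR (m+3) := by
      have := XR (m+4); push_cast at this; exact this
    calc X^3 * hR (m+2) = X * (X * (X * hR (m+2))) := by ring
      _ = X * (X * hR (m+3)) + C ((m:ℝ)+2) * (X * (X * hR (m+1))) := by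
          rw [a2]; ring
      _ = X * hR (m+4) + C ((m:ℝ)+3) * (X * hR (m+2))
            + C ((m:ℝ)+2) * (X * hR (m+2)) + C ((m:ℝ)+2) * (C ((m:ℝ)+1) * (X * hR m)) := by
          rw [a3, a1]; ring
      _ = (hR (m+5) + C ((m:ℝ)+4) * hR (m+3))
            + C ((m:ℝ)+3) * (hR (m+3) + C ((m:ℝ)+2) * hR (m+1))
            + C ((m:ℝ)+2) * (hR (m+3) + C ((m:ℝ)+2) * hR (m+1))
            + C ((m:ℝ)+2) * (C ((m:ℝ)+1) * (hR (m+1) + C (m:ℝ) * hR (m-1))) := by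
          rw [a4, a2, a0]
      _ = _ := by
          rw [show m + 1 + 4 = m + 5 from rfl, show m + 1 + 2 = m + 3 from rfl,
            show m + 1 - 2 = m - 1 from rfl]
          simp only [← smul_eq_C_mul]
          match_scalars <;> push_cast <;> ring

/-- the cubic recurrence
`x³ H_k^{(1)} = ((k-1)/(k+2)) H_{k+3}^{(1)} + 3(k-1) H_{k+1}^{(1)} + 3k(k-1) H_{k-1}^{(1)}
+ k(k-1)(k-2) H_{k-3}^{(1)}` for all `k ≥ 3`. -/
theorem mHermiteOne_cubic_recurrence (k : ℕ) (hk : 3 ≤ k) :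
    X ^ 3 * mHermiteOne k
      = C (((k : ℝ) - 1) / ((k : ℝ) + 2)) * mHermiteOne (k + 3)
        + C (3 * ((k : ℝ) - 1)) * mHermiteOne (k + 1)
        + C (3 * (k : ℝ) * ((k : ℝ) - 1)) * mHermiteOne (k - 1)
        + C ((k : ℝ) * ((k : ℝ) - 1) * ((k : ℝ) - 2)) * mHermiteOne (k - 3) := by
  obtain ⟨n, rfl⟩ : ∃ n, k = n + 3 := ⟨k - 3, by omega⟩
  have c1 := cubic (n+2)
  have c2 := cubic n
  rw [show n + 2 + 1 = n + 3 from rfl, show n + 2 + 4 = n + 6 from rfl,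
    show n + 2 + 2 = n + 4 from rfl, show n + 2 - 2 = n from rfl] at c1
  rw [show n + 3 + 3 = n + 6 from rfl, show n + 3 + 1 = n + 4 from rfl,
    show n + 3 - 1 = n + 2 from rfl, show n + 3 - 3 = n from rfl]
  rw [mho (n+3), mho (n+6), mho (n+4), mho (n+2), mho n]
  rw [show n + 3 - 2 = n + 1 from rfl, show n + 6 - 2 = n + 4 from rfl,
    show n + 4 - 2 = n + 2 from rfl, show n + 2 - 2 = n from rfl]
  rw [mul_add, mul_left_comm (X^3 : Polynomial ℝ), mul_left_comm (X^3 : Polynomial ℝ),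
    c1, c2]
  have hne : ((n:ℝ) + 5) ≠ 0 := by positivity
  simp only [← smul_eq_C_mul]
  match_scalars <;> push_cast <;> field_simp <;> first | ring1 | (left; first | ring1 | trivial)
end
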